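/- arXiv:2006.12966 — 14 statements merged into one kernel-verified Lean document; each statement's English description precedes it below -/
import Mathlib

section
/- Fix ψ > 1 and μ ∈ ℝ, and consider real sequences (x_t)_{t≥0} satisfying x_{t+1} = max{−μ, ψ x_t} for all t ≥ 0. (i) If μ < 0, then every such sequence diverges to +∞; in particular no bounded solution exists. (ii) If μ ≥ 0, then for every t ≥ 1 any solution with x_0 ≤ 0 satisfies x_t ∈ [−μ, 0] (so bounded solutions exist), while every solution with x_0 > 0 diverges to +∞. Consequently, a bounded solution exists if and only if μ ≥ 0. -/
open Filter

private lemma aux_tendsto (ψ μ : ℝ) (hψ : 1 < ψ) (x : ℕ → ℝ)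
    (hx : ∀ t, x (t + 1) = max (-μ) (ψ * x t)) (t0 : ℕ) (h0 : 0 < x t0) :
    Tendsto x atTop atTop := by
  have hψ0 : (0:ℝ) < ψ := lt_trans one_pos hψ
  have key : ∀ n, ψ ^ n * x t0 ≤ x (n + t0) := by
    intro n
    induction n with
    | zero => simp
    | succ n ih =>
      have h1 : ψ ^ (n + 1) * x t0 = ψ * (ψ ^ n * x t0) := by ring
      have h2 : ψ * (ψ ^ n * x t0) ≤ ψ * x (n + t0) :=
        mul_le_mul_of_nonneg_left ih hψ0.le
      have h3 : x (n + 1 + t0) = max (-μ) (ψ * x (n + t0)) := by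
        have := hx (n + t0); simpa [Nat.add_right_comm] using this
      rw [h3, h1]
      exact le_trans h2 (le_max_right _ _)
  have htend : Tendsto (fun n => ψ ^ n * x t0) atTop atTop :=
    (tendsto_pow_atTop_atTop_of_one_lt hψ).atTop_mul_const h0
  have : Tendsto (fun n => x (n + t0)) atTop atTop :=
    tendsto_atTop_mono key htend
  exact (tendsto_add_atTop_iff_nat t0).mp this

private lemma aux_neg (ψ μ : ℝ) (hψ : 1 < ψ) (hμ : μ < 0) (x : ℕ → ℝ)
    (hx : ∀ t, x (t + 1) = max (-μ) (ψ * x t)) : Tendsto x atTop atTop := by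
  have h1 : 0 < x 1 := by
    rw [hx 0]
    exact lt_of_lt_of_le (by linarith) (le_max_left _ _)
  exact aux_tendsto ψ μ hψ x hx 1 h1

/-- Coherency of the absorbing-state dynamics `x_{t+1} = max {−μ, ψ x_t}` with an
active Taylor rule `ψ > 1`: (i) if `μ < 0` every solution diverges to `+∞` (so no
bounded solution exists), (ii) if `μ ≥ 0` any solution starting at `x 0 ≤ 0` stays
in `[−μ, 0]` from `t = 1` on, while any solution with `x 0 > 0` diverges to `+∞`;
consequently a bounded solution exists iff `μ ≥ 0`. -/
theorem bounded_solution_iff_mu_nonneg (ψ μ : ℝ) (hψ : 1 < ψ) :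
    (μ < 0 → ∀ x : ℕ → ℝ, (∀ t, x (t + 1) = max (-μ) (ψ * x t)) →
        Tendsto x atTop atTop) ∧
    (μ < 0 → ¬ ∃ x : ℕ → ℝ, (∀ t, x (t + 1) = max (-μ) (ψ * x t)) ∧
        ∃ B : ℝ, ∀ t, |x t| ≤ B) ∧
    (0 ≤ μ → ∀ x : ℕ → ℝ, (∀ t, x (t + 1) = max (-μ) (ψ * x t)) →
        ((x 0 ≤ 0 → ∀ t, 1 ≤ t → x t ∈ Set.Icc (-μ) 0) ∧
         (0 < x 0 → Tendsto x atTop atTop))) ∧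
    ((∃ x : ℕ → ℝ, (∀ t, x (t + 1) = max (-μ) (ψ * x t)) ∧
        ∃ B : ℝ, ∀ t, |x t| ≤ B) ↔ 0 ≤ μ) := by
  refine ⟨fun hμ x hx => aux_neg ψ μ hψ hμ x hx, ?_, ?_, ?_⟩
  · rintro hμ ⟨x, hx, B, hB⟩
    have := aux_neg ψ μ hψ hμ x hx
    obtain ⟨t, ht⟩ := (this.eventually_ge_atTop (B + 1)).exists
    have := hB t
    have := abs_le.mp this
    linarith [this.2]
  · intro hμ x hx
    constructor
    · intro h0 t ht
      induction t with
      | zero => omega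
      | succ t ih =>
        rcases Nat.eq_or_lt_of_le ht with h | h
        · obtain rfl : t = 0 := by omega
          rw [hx 0]
          constructor
          · exact le_max_left _ _
          · have : ψ * x 0 ≤ 0 := mul_nonpos_of_nonneg_of_nonpos (by linarith) h0
            exact max_le (by linarith) this
        · have hprev := ih (by omega)
          rw [hx t]
          constructor
          · exact le_max_left _ _
          · have : ψ * x t ≤ 0 :=
              mul_nonpos_of_nonneg_of_nonpos (by linarith) hprev.2
            exact max_le (by linarith) this
    · intro h0
      exact aux_tendsto ψ μ hψ x hx 0 h0
  · constructor
    · intro ⟨x, hx, B, hB⟩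
      by_contra h
      push_neg at h
      have := aux_neg ψ μ hψ h x hx
      obtain ⟨t, ht⟩ := (this.eventually_ge_atTop (B + 1)).exists
      have := abs_le.mp (hB t)
      linarith [this.2]
    · intro hμ
      refine ⟨fun _ => -μ, fun t => ?_, μ, fun t => by simp [abs_of_nonpos, hμ]⟩
      have : ψ * (-μ) ≤ -μ := by nlinarith
      rw [max_eq_left this]
end

section
/- Let 0 < p < 1, ψ > 1, r > 0, π* > 0 with μ := log(rπ*) ≥ 0, let π̄ ∈ (0, π*] satisfy rπ̄ − 1 + p > 0, and let r^L < 0. Define D := (−∞, (log(π̄/π*) − log(1−p))/ψ) and g : D → ℝ by g(x) = log( (p π̄/π*) / (rπ̄ − 1 + p) ) − r^L for x ≤ −μ/ψ, and g(x) = log( (p π̄/π*) / (π̄/π* − (1−p)e^{ψx}) ) + ψx − r^L for −μ/ψ < x, x ∈ D. Then g has a fixed point in D if and only if −r^L ≤ −μ/ψ − log( (p π̄/π*) / (rπ̄ − 1 + p) ); moreover, when this inequality fails, g(x) > x for every x ∈ D. -/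
/-- Transitory-state coherency of the nonlinear model: the transition map `g` for
log inflation deviations in the transitory state has a fixed point on its domain
`D` iff the negative real-rate shock satisfies the support restriction
`−r^L ≤ −μ/ψ − log((p π̄/π*)/(rπ̄ − 1 + p))`; when the restriction fails,
`g x > x` for every `x ∈ D`. -/
theorem transitory_fixed_point_iff_support_restriction
    (p ψ r pis pib rL : ℝ)
    (hp0 : 0 < p) (hp1 : p < 1) (hψ : 1 < ψ) (hr : 0 < r) (hpis : 0 < pis)
    (hμ : 0 ≤ Real.log (r * pis))
    (hpib0 : 0 < pib) (hpib : pib ≤ pis)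
    (hden : 0 < r * pib - 1 + p) (hrL : rL < 0) :
    (let μ : ℝ := Real.log (r * pis)
     let D : Set ℝ := Set.Iio ((Real.log (pib / pis) - Real.log (1 - p)) / ψ)
     let g : ℝ → ℝ := fun x =>
       if x ≤ -μ / ψ then
         Real.log ((p * (pib / pis)) / (r * pib - 1 + p)) - rL
       else
         Real.log ((p * (pib / pis)) / (pib / pis - (1 - p) * Real.exp (ψ * x)))
           + ψ * x - rL
     ((∃ x ∈ D, g x = x) ↔
        -rL ≤ -μ / ψ - Real.log ((p * (pib / pis)) / (r * pib - 1 + p))) ∧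
     (¬ (-rL ≤ -μ / ψ - Real.log ((p * (pib / pis)) / (r * pib - 1 + p))) →
        ∀ x ∈ D, x < g x)) := by
  intro μ D g
  have hψ0 : (0:ℝ) < ψ := by linarith
  have hq : (0:ℝ) < 1 - p := by linarith
  have hb : 0 < pib / pis := div_pos hpib0 hpis
  have hpb : 0 < p * (pib / pis) := mul_pos hp0 hb
  have hrpis : 0 < r * pis := mul_pos hr hpis
  have hA : 0 < p * (pib / pis) / (r * pib - 1 + p) := div_pos hpb hden
  set c : ℝ := Real.log (p * (pib / pis) / (r * pib - 1 + p)) with hc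
  have hμdef : μ = Real.log (r * pis) := rfl
  -- `-μ/ψ` lies strictly inside `D`
  have hcore : Real.log (1 - p) - Real.log (pib / pis) < μ := by
    have hlt : (1 - p) / (pib / pis) < r * pis := by
      rw [div_lt_iff₀ hb]
      have hEq : r * pis * (pib / pis) = r * pib := by field_simp
      rw [hEq]; linarith
    have h := Real.log_lt_log (div_pos hq hb) hlt
    rw [Real.log_div (ne_of_gt hq) (ne_of_gt hb)] at h
    rw [hμdef]; exact h
  have hXlt : -μ / ψ < (Real.log (pib / pis) - Real.log (1 - p)) / ψ := by
    apply div_lt_div_of_pos_right (by linarith) hψ0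
  -- the key log comparison on the second branch
  have hB : ¬ (-rL ≤ -μ / ψ - c) → ∀ x ∈ D, x < g x := by
    intro hns x hx
    push_neg at hns
    by_cases hxle : x ≤ -μ / ψ
    · show x < g x
      simp only [g, if_pos hxle]
      linarith
    · push_neg at hxle
      have hxD : x < (Real.log (pib / pis) - Real.log (1 - p)) / ψ := hx
      -- positivity of the denominator on D
      have hexpD : Real.exp (ψ * x) < (pib / pis) * (1 - p)⁻¹ := by
        have h1 : ψ * x < Real.log (pib / pis) - Real.log (1 - p) := by
          rw [lt_div_iff₀ hψ0] at hxD; linarith [hxD]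
        have := Real.exp_lt_exp.mpr h1
        rwa [Real.exp_sub, Real.exp_log hb, Real.exp_log hq, div_eq_mul_inv] at this
      have hxden : 0 < pib / pis - (1 - p) * Real.exp (ψ * x) := by
        have h2 : (1 - p) * Real.exp (ψ * x) < (1 - p) * ((pib / pis) * (1 - p)⁻¹) :=
          mul_lt_mul_of_pos_left hexpD hq
        have h3 : (1 - p) * ((pib / pis) * (1 - p)⁻¹) = pib / pis := by
          field_simp
        rw [h3] at h2
        linarith
      -- the denominator is smaller than its value at the kink
      have hexpK : (r * pis)⁻¹ < Real.exp (ψ * x) := by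
        have h1 : -μ < x * ψ := (div_lt_iff₀ hψ0).mp hxle
        have h2 : Real.exp (-μ) < Real.exp (ψ * x) := Real.exp_lt_exp.mpr (by linarith)
        rwa [hμdef, Real.exp_neg, Real.exp_log hrpis] at h2
      have hxlt : pib / pis - (1 - p) * Real.exp (ψ * x) < (r * pib - 1 + p) / (r * pis) := by
        have h2 : (1 - p) * (r * pis)⁻¹ < (1 - p) * Real.exp (ψ * x) :=
          mul_lt_mul_of_pos_left hexpK hq
        have heq : pib / pis - (1 - p) * (r * pis)⁻¹ = (r * pib - 1 + p) / (r * pis) := by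
          field_simp; ring
        rw [← heq]
        linarith
      have h1 : (p * (pib / pis)) / ((r * pib - 1 + p) / (r * pis)) <
          (p * (pib / pis)) / (pib / pis - (1 - p) * Real.exp (ψ * x)) :=
        div_lt_div_of_pos_left hpb hxden hxlt
      have h2 : (p * (pib / pis)) / ((r * pib - 1 + p) / (r * pis)) =
          (p * (pib / pis) / (r * pib - 1 + p)) * (r * pis) := by
        field_simp
      rw [h2] at h1
      have h3 : Real.log ((p * (pib / pis) / (r * pib - 1 + p)) * (r * pis)) = c + μ := by
        rw [Real.log_mul (ne_of_gt hA) (ne_of_gt hrpis), hμdef]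
      have hlog : c + μ <
          Real.log ((p * (pib / pis)) / (pib / pis - (1 - p) * Real.exp (ψ * x))) := by
        rw [← h3]
        exact Real.log_lt_log (mul_pos hA hrpis) h1
      show x < g x
      simp only [g, if_neg (not_le.mpr hxle)]
      -- x > -μ/ψ gives (ψ-1)x > μ/ψ - μ
      have h4 : (ψ - 1) * (-μ / ψ) < (ψ - 1) * x :=
        mul_lt_mul_of_pos_left hxle (by linarith)
      have h5 : (ψ - 1) * (-μ / ψ) = μ / ψ - μ := by field_simp; ring
      rw [h5] at h4
      have h6 : (ψ - 1) * x = ψ * x - x := by ring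
      rw [h6] at h4
      have hneg : -μ / ψ = -(μ / ψ) := by ring
      rw [hneg] at hns
      linarith
  refine ⟨⟨?_, ?_⟩, hB⟩
  · rintro ⟨x, hx, hfx⟩
    by_contra hn
    exact absurd hfx (ne_of_gt (hB hn x hx))
  · intro hle
    refine ⟨c - rL, ?_, ?_⟩
    · show c - rL < (Real.log (pib / pis) - Real.log (1 - p)) / ψ
      linarith
    · show g (c - rL) = c - rL
      simp only [g, if_pos (show c - rL ≤ -μ / ψ by linarith)]
      rfl
end

section
/- Let ψ > 1, p, q ∈ [0,1], β ∈ (0,1), σ > 0, λ > 0. Define K := [[p, 1−p],[1−q, q]], Q := I₂ − K − β(I₂ − K)K − λσK, e₁ := (1,0)ᵀ, e₂ := (0,1)ᵀ, and the matrices A₁ := Q + λσψ I₂, A₂ := Q + λσψ e₂e₂ᵀ, A₃ := Q + λσψ e₁e₁ᵀ, A₄ := Q. Then det A₁ > 0, and either det A₄ ≤ 0 or det A₂ < 0. In particular, the four determinants det A₁, det A₂, det A₃, det A₄ do not all share the same strict sign, so the coherency condition fails: the New Keynesian model with an active Taylor rule is not generically coherent. -/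
open Matrix

/-- The New Keynesian model with an active Taylor rule (`ψ > 1`) is not
generically coherent: among the four regime-configuration matrices
`A₁, A₂, A₃, A₄`, one has `det A₁ > 0` while either `det A₄ ≤ 0` or
`det A₂ < 0`; in particular the four determinants never all share the same
strict sign. -/
theorem nk_taylor_rule_not_coherent (ψ p q β σ lam : ℝ) (hψ : 1 < ψ)
    (hp : p ∈ Set.Icc (0:ℝ) 1) (hq : q ∈ Set.Icc (0:ℝ) 1)
    (hβ : β ∈ Set.Ioo (0:ℝ) 1) (hσ : 0 < σ) (hlam : 0 < lam) :
    (let K : Matrix (Fin 2) (Fin 2) ℝ := !![p, 1 - p; 1 - q, q]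
     let Q : Matrix (Fin 2) (Fin 2) ℝ := 1 - K - β • ((1 - K) * K) - (lam * σ) • K
     let A₁ : Matrix (Fin 2) (Fin 2) ℝ := Q + (lam * σ * ψ) • (1 : Matrix (Fin 2) (Fin 2) ℝ)
     let A₂ : Matrix (Fin 2) (Fin 2) ℝ := Q + (lam * σ * ψ) • !![(0:ℝ), 0; 0, 1]
     let A₃ : Matrix (Fin 2) (Fin 2) ℝ := Q + (lam * σ * ψ) • !![(1:ℝ), 0; 0, 0]
     let A₄ : Matrix (Fin 2) (Fin 2) ℝ := Q
     0 < A₁.det ∧ (A₄.det ≤ 0 ∨ A₂.det < 0) ∧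
     ¬ ((0 < A₁.det ∧ 0 < A₂.det ∧ 0 < A₃.det ∧ 0 < A₄.det) ∨
        (A₁.det < 0 ∧ A₂.det < 0 ∧ A₃.det < 0 ∧ A₄.det < 0))) := by
  obtain ⟨hp0, hp1⟩ := hp
  obtain ⟨hq0, hq1⟩ := hq
  obtain ⟨hβ0, hβ1⟩ := hβ
  intro K Q A₁ A₂ A₃ A₄
  have hK : K = !![p, 1 - p; 1 - q, q] := rfl
  have hQ : Q = 1 - K - β • ((1 - K) * K) - (lam * σ) • K := rfl
  have h1 : A₁ = Q + (lam * σ * ψ) • (1 : Matrix (Fin 2) (Fin 2) ℝ) := rfl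
  have h2 : A₂ = Q + (lam * σ * ψ) • !![(0:ℝ), 0; 0, 1] := rfl
  have h4 : A₄ = Q := rfl
  set a := lam * σ with haa
  have ha0 : 0 < a := mul_pos hlam hσ
  set r := p + q - 1 with hrr
  have hr1 : r ≤ 1 := by simp only [hrr]; linarith
  have hbr : β * r < 1 := by nlinarith
  -- closed forms of determinants
  have d1 : A₁.det = a * (ψ - 1) * ((1 - r) * (1 - β * r) + a * (ψ - r)) := by
    rw [h1, hQ, hK]
    simp [Matrix.det_fin_two, Matrix.mul_apply, Fin.sum_univ_two, Matrix.one_apply]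
    ring
  have d4 : A₄.det = a * (a * r - (1 - r) * (1 - β * r)) := by
    rw [h4, hQ, hK]
    simp [Matrix.det_fin_two, Matrix.mul_apply, Fin.sum_univ_two, Matrix.one_apply]
    ring
  have d2 : A₂.det = A₄.det + a * ψ * ((1 - p) * (1 - β * r) - a * p) := by
    rw [h2, h4, hQ, hK]
    simp [Matrix.det_fin_two, Matrix.mul_apply, Fin.sum_univ_two, Matrix.one_apply]
    ring
  have hA1 : 0 < A₁.det := by
    rw [d1]
    have : 0 < (1 - r) * (1 - β * r) + a * (ψ - r) := by nlinarith
    have h2' : 0 < a * (ψ - 1) := mul_pos ha0 (by linarith)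
    exact mul_pos h2' this
  have hmain : A₄.det ≤ 0 ∨ A₂.det < 0 := by
    by_cases h : A₄.det ≤ 0
    · exact Or.inl h
    · right
      push_neg at h
      rw [d4] at h
      have hc : (1 - r) * (1 - β * r) < a * r := by nlinarith
      have hQ11 : (1 - p) * (1 - β * r) - a * p < 0 := by nlinarith
      rw [d2, d4]
      have hv : a * (a * r - (1 - r) * (1 - β * r)) + a * 1 * ((1 - p) * (1 - β * r) - a * p)
          = -(a * (1 - q) * ((1 - β * r) + a)) := by rw [hrr]; ring
      nlinarith [mul_lt_mul_of_pos_left (mul_lt_mul_of_neg_right hψ hQ11) ha0,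
        mul_nonneg (mul_nonneg ha0.le (by linarith : (0:ℝ) ≤ 1 - q)) (by linarith : (0:ℝ) ≤ (1 - β * r) + a)]
  refine ⟨hA1, hmain, ?_⟩
  rintro (⟨_, h2', _, h4'⟩ | ⟨h1', _, _, _⟩)
  · rcases hmain with h | h <;> linarith
  · linarith
end

section
/- Let p ∈ ℝ, β, σ, λ, ψ, ψ_x ∈ ℝ with λ ≠ 0, set K := [[p, 1−p],[0, 1]], Q := I₂ − K − β(I₂ − K)K − λσK, e₂ := (0,1)ᵀ, A₂ := Q + λσ(ψ I₂ − (ψ_x/λ)(I₂ − βK)) e₂e₂ᵀ, and A₄ := Q. Then det A₂ = −det A₄ · (ψ + ((β−1)/λ)ψ_x − 1). Consequently, if the Taylor principle ψ + ((β−1)/λ)ψ_x > 1 holds and det A₄ ≠ 0, then det A₂ and det A₄ have strictly opposite signs, so the coherency condition fails. -/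
open Matrix

/-- With an absorbing state (`q = 1`), the determinant of the (ZIR,PIR)
regime matrix `A₂` satisfies `det A₂ = −det A₄ · (ψ + ((β−1)/λ)ψ_x − 1)`;
hence under the Taylor principle `ψ + ((β−1)/λ)ψ_x > 1` and `det A₄ ≠ 0`,
the determinants `det A₂` and `det A₄` have strictly opposite signs, so the
coherency condition fails. -/
theorem nk_absorbing_det_identity (p β σ lam ψ ψx : ℝ) (hlam : lam ≠ 0) :
    (let K : Matrix (Fin 2) (Fin 2) ℝ := !![p, 1 - p; 0, 1]
     let Q : Matrix (Fin 2) (Fin 2) ℝ := 1 - K - β • ((1 - K) * K) - (lam * σ) • K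
     let A₂ : Matrix (Fin 2) (Fin 2) ℝ :=
       Q + (lam * σ) • ((ψ • (1 : Matrix (Fin 2) (Fin 2) ℝ)
            - (ψx / lam) • ((1 : Matrix (Fin 2) (Fin 2) ℝ) - β • K)) * !![(0:ℝ), 0; 0, 1])
     let A₄ : Matrix (Fin 2) (Fin 2) ℝ := Q
     A₂.det = -A₄.det * (ψ + ((β - 1) / lam) * ψx - 1) ∧
     (1 < ψ + ((β - 1) / lam) * ψx → A₄.det ≠ 0 → A₂.det * A₄.det < 0)) := by
  intro K Q A₂ A₄
  have hK : K = !![p, 1 - p; 0, 1] := rfl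
  have heq : A₂.det = -A₄.det * (ψ + ((β - 1) / lam) * ψx - 1) := by
    show (Q + (lam * σ) • ((ψ • (1 : Matrix (Fin 2) (Fin 2) ℝ)
            - (ψx / lam) • ((1 : Matrix (Fin 2) (Fin 2) ℝ) - β • K)) * !![(0:ℝ), 0; 0, 1])).det
        = -Q.det * (ψ + ((β - 1) / lam) * ψx - 1)
    simp only [Q, hK, det_fin_two, Matrix.add_apply, Matrix.sub_apply, Matrix.smul_apply,
      Matrix.one_apply, Matrix.mul_apply, Fin.sum_univ_two, Matrix.cons_val', Matrix.cons_val_zero,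
      Matrix.cons_val_one, Matrix.head_cons, Matrix.head_fin_const, Matrix.empty_val',
      Matrix.cons_val_fin_one, smul_eq_mul, Matrix.of_apply, if_true, (zero_ne_one : (0 : Fin 2) ≠ 1),
      (one_ne_zero : (1 : Fin 2) ≠ 0), if_false]
    field_simp
    ring
  refine ⟨heq, fun hψ h4 => ?_⟩
  rw [heq]
  have hd : 0 < A₄.det * A₄.det := mul_self_pos.mpr h4
  nlinarith [hd]
end

section
/- Let γ > 0, λ > 0, σ > 0, β ∈ (0,1), p, q ∈ [0,1]. Define K := [[p, 1−p],[1−q, q]], Q := I₂ − K − β(I₂ − K)K − λσK, e₁ := (1,0)ᵀ, e₂ := (0,1)ᵀ, and B₁ := (1 + λ²/γ)I₂ − βK, B₂ := I₂ − βK − e₁e₁ᵀ(K(I₂ − βK) + λσK) + (λ²/γ)e₂e₂ᵀ, B₃ := I₂ − βK − e₂e₂ᵀ(K(I₂ − βK) + λσK) + (λ²/γ)e₁e₁ᵀ, B₄ := Q. Then det B₁ > 0, and either det B₄ ≤ 0 or (det B₂ < 0 and det B₃ < 0). In particular, the four determinants det B₁,…,det B₄ never all share the same strict sign, so the New Keynesian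 model under optimal discretionary monetary policy is not generically coherent. -/
open Matrix

set_option maxHeartbeats 1000000

/-- The New Keynesian model under optimal discretionary policy is not
generically coherent: among the four regime-configuration matrices
`B₁, B₂, B₃, B₄`, one has `det B₁ > 0` while either `det B₄ ≤ 0` or both
`det B₂ < 0` and `det B₃ < 0`; in particular the four determinants never all
share the same strict sign. -/
theorem nk_optimal_policy_not_coherent (γ lam σ β p q : ℝ)
    (hγ : 0 < γ) (hlam : 0 < lam) (hσ : 0 < σ) (hβ : β ∈ Set.Ioo (0:ℝ) 1)
    (hp : p ∈ Set.Icc (0:ℝ) 1) (hq : q ∈ Set.Icc (0:ℝ) 1) :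
    (let K : Matrix (Fin 2) (Fin 2) ℝ := !![p, 1 - p; 1 - q, q]
     let Q : Matrix (Fin 2) (Fin 2) ℝ := 1 - K - β • ((1 - K) * K) - (lam * σ) • K
     let E₁ : Matrix (Fin 2) (Fin 2) ℝ := !![1, 0; 0, 0]
     let E₂ : Matrix (Fin 2) (Fin 2) ℝ := !![0, 0; 0, 1]
     let B₁ : Matrix (Fin 2) (Fin 2) ℝ :=
       (1 + lam ^ 2 / γ) • (1 : Matrix (Fin 2) (Fin 2) ℝ) - β • K
     let B₂ : Matrix (Fin 2) (Fin 2) ℝ :=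
       1 - β • K - E₁ * (K * (1 - β • K) + (lam * σ) • K) + (lam ^ 2 / γ) • E₂
     let B₃ : Matrix (Fin 2) (Fin 2) ℝ :=
       1 - β • K - E₂ * (K * (1 - β • K) + (lam * σ) • K) + (lam ^ 2 / γ) • E₁
     let B₄ : Matrix (Fin 2) (Fin 2) ℝ := Q
     0 < B₁.det ∧ (B₄.det ≤ 0 ∨ (B₂.det < 0 ∧ B₃.det < 0)) ∧
     ¬ ((0 < B₁.det ∧ 0 < B₂.det ∧ 0 < B₃.det ∧ 0 < B₄.det) ∨
        (B₁.det < 0 ∧ B₂.det < 0 ∧ B₃.det < 0 ∧ B₄.det < 0))) := by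
  intro K Q E₁ E₂ B₁ B₂ B₃ B₄
  obtain ⟨hβ0, hβ1⟩ := hβ
  obtain ⟨hp0, hp1⟩ := hp
  obtain ⟨hq0, hq1⟩ := hq
  have hd1 : B₁.det = (1 + lam ^ 2 / γ - β * p) * (1 + lam ^ 2 / γ - β * q)
      - (β * (1 - p)) * (β * (1 - q)) := by
    simp [B₁, K, Matrix.det_fin_two, Matrix.one_fin_two]
    all_goals ring
  have hd2 : B₂.det = ((1 - p) * (1 - β * (p + q - 1)) - lam * σ * p) * (1 - β * q + lam ^ 2 / γ)
      - (β * (1 - q)) * ((1 - p) * (1 + lam * σ - β * (p + q - 1))) := by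
    simp [B₂, K, E₁, E₂, Matrix.det_fin_two, Matrix.one_fin_two, Matrix.mul_fin_two]
    all_goals ring
  have hd3 : B₃.det = ((1 - q) * (1 - β * (p + q - 1)) - lam * σ * q) * (1 - β * p + lam ^ 2 / γ)
      - (β * (1 - p)) * ((1 - q) * (1 + lam * σ - β * (p + q - 1))) := by
    simp [B₃, K, E₁, E₂, Matrix.det_fin_two, Matrix.one_fin_two, Matrix.mul_fin_two]
    all_goals ring
  have hd4 : B₄.det = lam * σ * (lam * σ * (p + q - 1)
      - (1 - (p + q - 1)) * (1 - β * (p + q - 1))) := by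
    simp [B₄, Q, K, Matrix.det_fin_two, Matrix.one_fin_two, Matrix.mul_fin_two]
    all_goals ring
  clear_value K Q E₁ E₂ B₁ B₂ B₃ B₄
  clear K Q E₁ E₂
  have hL : 0 < lam ^ 2 / γ := div_pos (by positivity) hγ
  set L : ℝ := lam ^ 2 / γ with hLdef
  set s : ℝ := p + q - 1 with hsdef
  set a : ℝ := lam * σ with hadef
  have ha : 0 < a := mul_pos hlam hσ
  have h1pos : 0 < B₁.det := by
    rw [hd1]
    have h1 : β * (1 - p) < 1 + L - β * p := by nlinarith
    have h2 : β * (1 - q) < 1 + L - β * q := by nlinarith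
    have h3 : 0 ≤ β * (1 - p) := by nlinarith
    have h4 : 0 < 1 + L - β * q := by nlinarith
    nlinarith [mul_lt_mul_of_lt_of_le_of_nonneg_of_pos h1 h2.le h3 h4]
  have hmain : B₄.det ≤ 0 ∨ (B₂.det < 0 ∧ B₃.det < 0) := by
    by_cases h4 : B₄.det ≤ 0
    · exact Or.inl h4
    · right
      push_neg at h4
      rw [hd4] at h4
      have hkey : (1 - s) * (1 - β * s) < a * s := by nlinarith
      have hs0 : 0 < s := by
        by_contra hc
        push_neg at hc
        have hb1 : (0:ℝ) < (1 - s) * (1 - β * s) :=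
          mul_pos (by linarith) (by nlinarith [mul_nonneg hβ0.le (neg_nonneg.2 hc)])
        nlinarith [mul_nonneg ha.le (neg_nonneg.2 hc)]
      have hps : s ≤ p := by rw [hsdef]; linarith
      have hqs : s ≤ q := by rw [hsdef]; linarith
      have hβs : β * s < 1 := by
        have := mul_le_of_le_one_right hβ0.le (by linarith : s ≤ 1)
        linarith
      have hQ11 : (1 - p) * (1 - β * s) - a * p < 0 := by
        have h5 : (1 - p) * (1 - β * s) ≤ (1 - s) * (1 - β * s) :=
          mul_le_mul_of_nonneg_right (by linarith) (by linarith)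
        have h6 : a * s ≤ a * p := mul_le_mul_of_nonneg_left hps ha.le
        linarith
      have hQ22 : (1 - q) * (1 - β * s) - a * q < 0 := by
        have h5 : (1 - q) * (1 - β * s) ≤ (1 - s) * (1 - β * s) :=
          mul_le_mul_of_nonneg_right (by linarith) (by linarith)
        have h6 : a * s ≤ a * q := mul_le_mul_of_nonneg_left hqs ha.le
        linarith
      constructor
      · rw [hd2]
        have ht1 : ((1 - p) * (1 - β * s) - a * p) * (1 - β * q + L) < 0 :=
          mul_neg_of_neg_of_pos hQ11
            (by linarith [mul_le_one₀ hβ1.le hq0 hq1])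
        have ht2 : 0 ≤ (β * (1 - q)) * ((1 - p) * (1 + a - β * s)) := by
          have h6 : 0 ≤ 1 + a - β * s := by linarith
          have h7 : 0 ≤ 1 - q := by linarith
          have h8 : 0 ≤ 1 - p := by linarith
          positivity
        linarith
      · rw [hd3]
        have ht1 : ((1 - q) * (1 - β * s) - a * q) * (1 - β * p + L) < 0 :=
          mul_neg_of_neg_of_pos hQ22
            (by linarith [mul_le_one₀ hβ1.le hp0 hp1])
        have ht2 : 0 ≤ (β * (1 - p)) * ((1 - q) * (1 + a - β * s)) := by
          have h6 : 0 ≤ 1 + a - β * s := by linarith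
          have h7 : 0 ≤ 1 - q := by linarith
          have h8 : 0 ≤ 1 - p := by linarith
          positivity
        linarith
  refine ⟨h1pos, hmain, ?_⟩
  rintro (⟨_, h2, _, h4⟩ | ⟨h1, _⟩)
  · rcases hmain with h | ⟨h, _⟩ <;> linarith
  · linarith
end

section
/- Let β ∈ (0,1), σ > 0, λ > 0, ψ > 1, p ∈ (0,1), μ ∈ ℝ, and r^L < 0. Set θ := (1−p)(1−pβ)/(pσλ), K := [[p, 1−p],[0, 1]], and ε := (σ p r^L, 0)ᵀ. Call a pair (π̂, x̂) ∈ ℝ² × ℝ² an MSV solution if, with R̂ := max{−μ(1,1)ᵀ, ψπ̂} taken componentwise, it satisfies π̂ = βKπ̂ + λx̂ and x̂ = Kx̂ − σ(R̂ − Kπ̂) + ε. Then an MSV solution exists if and only if either (θ > 1 and μ ≥ 0) or (θ ≤ 1 and μ ≥ 0 and −r^L ≤ μ((ψ−p)/(ψp) + θ/ψ)). -/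
open Matrix

private lemma nk_fwd (β σ lam ψ p μ rL P0 P1 X0 X1 : ℝ)
    (hβ0 : 0 < β) (hβ1 : β < 1) (hσ : 0 < σ) (hlam : 0 < lam) (hψ : 1 < ψ)
    (hp0 : 0 < p) (hp1 : p < 1) (hrL : rL < 0)
    (e1a : P0 = β * (p * P0 + (1 - p) * P1) + lam * X0)
    (e1b : P1 = β * P1 + lam * X1)
    (e2a : X0 = p * X0 + (1 - p) * X1 - σ * (max (-μ) (ψ * P0) - (p * P0 + (1 - p) * P1)) + σ * p * rL)
    (e2b : X1 = X1 - σ * (max (-μ) (ψ * P1) - P1)) :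
    (1 < (1 - p) * (1 - p * β) / (p * σ * lam) ∧ 0 ≤ μ) ∨
      ((1 - p) * (1 - p * β) / (p * σ * lam) ≤ 1 ∧ 0 ≤ μ ∧
        -rL ≤ μ * ((ψ - p) / (ψ * p) + (1 - p) * (1 - p * β) / (p * σ * lam) / ψ)) := by
  set T : ℝ := (1 - p) * (1 - p * β) with hT
  have hpβ : p * β < 1 := by nlinarith
  have hTpos : 0 < T := by rw [hT]; apply mul_pos (by linarith); linarith
  have hCpos : 0 < lam * σ * (ψ - p) + T := by
    have := mul_pos (mul_pos hlam hσ) (show (0:ℝ) < ψ - p by linarith)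
    linarith
  have hApos : 0 < (1 - p) * σ * lam + T := by
    have := mul_pos (mul_pos (show (0:ℝ) < 1 - p by linarith) hσ) hlam
    linarith
  -- absorbing state: max (-μ) (ψ * P1) = P1
  have hm1 : max (-μ) (ψ * P1) = P1 := by
    have h : σ * (max (-μ) (ψ * P1) - P1) = 0 := by linarith
    have := (mul_eq_zero.mp h).resolve_left (ne_of_gt hσ)
    linarith
  have habs : 0 ≤ μ ∧ (P1 = 0 ∨ P1 = -μ) := by
    rcases max_cases (-μ) (ψ * P1) with ⟨hmax, hge⟩ | ⟨hmax, hlt⟩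
    · have hP1 : P1 = -μ := by rw [hm1] at hmax; linarith
      rw [hP1] at hge
      exact ⟨by nlinarith, Or.inr hP1⟩
    · have hP1 : P1 = 0 := by rw [hm1] at hmax; nlinarith
      rw [hP1, mul_zero] at hlt
      exact ⟨by linarith, Or.inl hP1⟩
  obtain ⟨hμ, hP1cases⟩ := habs
  have star : lam * σ * (max (-μ) (ψ * P0)) =
      lam * σ * p * P0 - T * P0 + (lam * σ * (1 - p) + T) * P1 + lam * σ * p * rL := by
    rw [hT]
    linear_combination lam * e2a + (1 - p) * e1a - (1 - p) * e1b
  rcases le_or_gt (T / (p * σ * lam)) 1 with hθ | hθ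
  · right
    refine ⟨hθ, hμ, ?_⟩
    have hpσl : (0:ℝ) < p * σ * lam := by positivity
    have hθ' : T ≤ p * σ * lam := by rw [div_le_one hpσl] at hθ; linarith
    have hD : (0:ℝ) < ψ * p * σ * lam := by positivity
    have key : 0 ≤ μ * ((ψ - p) * σ * lam + T) + rL * (ψ * p * σ * lam) := by
      rcases hP1cases with hP1 | hP1 <;>
        rcases max_cases (-μ) (ψ * P0) with ⟨hmax, hc⟩ | ⟨hmax, hc⟩ <;>
          rw [hP1, hmax] at star
      · -- P1 = 0, ZLB
        have h1 : 0 ≤ (p * σ * lam - T) * (-μ - ψ * P0) :=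
          mul_nonneg (by linarith) (by linarith)
        have keyeq : μ * ((ψ - p) * σ * lam + T) + rL * (ψ * p * σ * lam)
            = (p * σ * lam - T) * (-μ - ψ * P0) := by linear_combination (-ψ) * star
        linarith
      · -- P1 = 0, Taylor
        have h1 : 0 ≤ (lam * σ * (ψ - p) + T) * (ψ * P0 + μ) :=
          mul_nonneg (by linarith) (by linarith)
        have keyeq : μ * ((ψ - p) * σ * lam + T) + rL * (ψ * p * σ * lam)
            = (lam * σ * (ψ - p) + T) * (ψ * P0 + μ) := by linear_combination (-ψ) * star
        linarith
      · -- P1 = -μ, ZLB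
        have h1 : 0 ≤ (p * σ * lam - T) * (-μ - ψ * P0) :=
          mul_nonneg (by linarith) (by linarith)
        have h2 : 0 ≤ μ * ψ * ((1 - p) * σ * lam + T) :=
          mul_nonneg (mul_nonneg hμ (by linarith)) (by linarith)
        have keyeq : μ * ((ψ - p) * σ * lam + T) + rL * (ψ * p * σ * lam)
            = (p * σ * lam - T) * (-μ - ψ * P0) + μ * ψ * ((1 - p) * σ * lam + T) := by
          linear_combination (-ψ) * star
        linarith
      · -- P1 = -μ, Taylor
        have h1 : 0 ≤ (lam * σ * (ψ - p) + T) * (ψ * P0 + μ) :=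
          mul_nonneg (by linarith) (by linarith)
        have h2 : 0 ≤ μ * ψ * ((1 - p) * σ * lam + T) :=
          mul_nonneg (mul_nonneg hμ (by linarith)) (by linarith)
        have keyeq : μ * ((ψ - p) * σ * lam + T) + rL * (ψ * p * σ * lam)
            = (lam * σ * (ψ - p) + T) * (ψ * P0 + μ) + μ * ψ * ((1 - p) * σ * lam + T) := by
          linear_combination (-ψ) * star
        linarith
    have heq : μ * ((ψ - p) / (ψ * p) + T / (p * σ * lam) / ψ)
        = (μ * ((ψ - p) * σ * lam + T)) / (ψ * p * σ * lam) := by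
      rw [hT]; field_simp
    rw [heq, le_div_iff₀ hD]
    linarith
  · exact Or.inl ⟨hθ, hμ⟩

private lemma nk_bwd (β σ lam ψ p μ rL : ℝ)
    (hβ0 : 0 < β) (hβ1 : β < 1) (hσ : 0 < σ) (hlam : 0 < lam) (hψ : 1 < ψ)
    (hp0 : 0 < p) (hp1 : p < 1) (hrL : rL < 0) (hμ : 0 ≤ μ)
    (h : (1 < (1 - p) * (1 - p * β) / (p * σ * lam) ∧ 0 ≤ μ) ∨
      ((1 - p) * (1 - p * β) / (p * σ * lam) ≤ 1 ∧ 0 ≤ μ ∧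
        -rL ≤ μ * ((ψ - p) / (ψ * p) + (1 - p) * (1 - p * β) / (p * σ * lam) / ψ))) :
    ∃ P0 X0 : ℝ,
      (P0 = β * (p * P0 + (1 - p) * 0) + lam * X0) ∧
      (X0 = p * X0 + (1 - p) * 0 - σ * (max (-μ) (ψ * P0) - (p * P0 + (1 - p) * 0)) + σ * p * rL) := by
  set T : ℝ := (1 - p) * (1 - p * β) with hT
  have hpβ : p * β < 1 := by nlinarith
  have hTpos : 0 < T := by rw [hT]; apply mul_pos (by linarith); linarith
  have hpσl : (0:ℝ) < p * σ * lam := by positivity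
  have hD : (0:ℝ) < ψ * p * σ * lam := by positivity
  have heq : μ * ((ψ - p) / (ψ * p) + T / (p * σ * lam) / ψ)
      = (μ * ((ψ - p) * σ * lam + T)) / (ψ * p * σ * lam) := by
    rw [hT]; field_simp
  rcases le_or_gt (-rL) (μ * ((ψ - p) / (ψ * p) + T / (p * σ * lam) / ψ)) with hcond | hcond
  · -- Taylor-branch solution
    have hcond' : -rL * (ψ * p * σ * lam) ≤ μ * ((ψ - p) * σ * lam + T) := by
      rw [heq, le_div_iff₀ hD] at hcond; linarith
    have hCpos : 0 < lam * σ * (ψ - p) + T := by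
      have := mul_pos (mul_pos hlam hσ) (show (0:ℝ) < ψ - p by linarith)
      linarith
    refine ⟨lam * σ * p * rL / (lam * σ * (ψ - p) + T),
      (1 - β * p) * (lam * σ * p * rL / (lam * σ * (ψ - p) + T)) / lam, ?_, ?_⟩
    · field_simp
      ring
    · have hmax : max (-μ) (ψ * (lam * σ * p * rL / (lam * σ * (ψ - p) + T)))
          = ψ * (lam * σ * p * rL / (lam * σ * (ψ - p) + T)) := by
        apply max_eq_right
        rw [mul_div_assoc', le_div_iff₀ hCpos]
        linarith
      rw [hmax]
      field_simp
      rw [hT]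
      ring
  · -- ZLB-branch solution; need θ > 1
    have hθ : 1 < T / (p * σ * lam) := by
      rcases h with ⟨h1, _⟩ | ⟨_, _, h3⟩
      · exact h1
      · exact absurd h3 (not_le.mpr hcond)
    have hθ' : p * σ * lam < T := by rw [lt_div_iff₀ hpσl] at hθ; linarith
    have hcond' : μ * ((ψ - p) * σ * lam + T) < -rL * (ψ * p * σ * lam) := by
      rw [heq, div_lt_iff₀ hD] at hcond
      · linarith
    have hDpos : 0 < T - lam * σ * p := by linarith
    refine ⟨lam * σ * (μ + p * rL) / (T - lam * σ * p),
      (1 - β * p) * (lam * σ * (μ + p * rL) / (T - lam * σ * p)) / lam, ?_, ?_⟩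
    · field_simp
      ring
    · have hmax : max (-μ) (ψ * (lam * σ * (μ + p * rL) / (T - lam * σ * p))) = -μ := by
        apply max_eq_left
        rw [mul_div_assoc', div_le_iff₀ hDpos]
        linarith
      rw [hmax]
      have hDne : T - lam * σ * p ≠ 0 := hDpos.ne'
      have hq := div_mul_cancel₀ (lam * σ * (μ + p * rL)) hDne
      generalize lam * σ * (μ + p * rL) / (T - lam * σ * p) = q at hq ⊢
      rw [hT] at hq
      linear_combination (norm := skip) (1 / lam) * hq
      field_simp
      ring

private lemma nk_aux (β σ lam ψ p μ rL : ℝ)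
    (hβ0 : 0 < β) (hβ1 : β < 1) (hσ : 0 < σ) (hlam : 0 < lam) (hψ : 1 < ψ)
    (hp0 : 0 < p) (hp1 : p < 1) (hrL : rL < 0) :
    (∃ pihat xhat : Fin 2 → ℝ,
        (∀ i, pihat i = β * ((!![p, 1 - p; 0, 1] : Matrix (Fin 2) (Fin 2) ℝ).mulVec pihat) i
            + lam * xhat i) ∧
        (∀ i, xhat i = ((!![p, 1 - p; 0, 1] : Matrix (Fin 2) (Fin 2) ℝ).mulVec xhat) i
            - σ * (max (-μ) (ψ * pihat i)
                - ((!![p, 1 - p; 0, 1] : Matrix (Fin 2) (Fin 2) ℝ).mulVec pihat) i)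
            + (![σ * p * rL, 0] : Fin 2 → ℝ) i))
      ↔ ((1 < (1 - p) * (1 - p * β) / (p * σ * lam) ∧ 0 ≤ μ) ∨
          ((1 - p) * (1 - p * β) / (p * σ * lam) ≤ 1 ∧ 0 ≤ μ ∧
            -rL ≤ μ * ((ψ - p) / (ψ * p) + (1 - p) * (1 - p * β) / (p * σ * lam) / ψ))) := by
  constructor
  · rintro ⟨P, X, h1, h2⟩
    have e1a := h1 0
    have e1b := h1 1
    have e2a := h2 0
    have e2b := h2 1
    simp [Matrix.mulVec, dotProduct, Fin.sum_univ_two] at e1a e1b e2a e2b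
    exact nk_fwd β σ lam ψ p μ rL (P 0) (P 1) (X 0) (X 1) hβ0 hβ1 hσ hlam hψ hp0 hp1 hrL
      e1a e1b e2a e2b
  · intro h
    have hμ : 0 ≤ μ := by rcases h with ⟨_, h2⟩ | ⟨_, h2, _⟩ <;> exact h2
    obtain ⟨P0, X0, he1, he2⟩ :=
      nk_bwd β σ lam ψ p μ rL hβ0 hβ1 hσ hlam hψ hp0 hp1 hrL hμ h
    refine ⟨![P0, 0], ![X0, 0], ?_, ?_⟩
    · intro i; fin_cases i
      · simp [Matrix.mulVec, dotProduct, Fin.sum_univ_two]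
        linarith [he1]
      · simp [Matrix.mulVec, dotProduct, Fin.sum_univ_two]
    · intro i; fin_cases i
      · simp [Matrix.mulVec, dotProduct, Fin.sum_univ_two]
        linarith [he2]
      · simp [Matrix.mulVec, dotProduct, Fin.sum_univ_two]
        exact Or.inr hμ

/-- Existence of a minimum state variable solution in the three-equation New
Keynesian model with an active Taylor rule and a two-state (transitory/absorbing)
discount factor shock: an MSV solution exists iff either (`θ > 1` and `μ ≥ 0`)
or (`θ ≤ 1`, `μ ≥ 0` and `−r^L ≤ μ((ψ−p)/(ψp) + θ/ψ)`). -/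
theorem nk_taylor_msv_exists_iff (β σ lam ψ p μ rL : ℝ)
    (hβ : β ∈ Set.Ioo (0:ℝ) 1) (hσ : 0 < σ) (hlam : 0 < lam) (hψ : 1 < ψ)
    (hp : p ∈ Set.Ioo (0:ℝ) 1) (hrL : rL < 0) :
    (let θ : ℝ := (1 - p) * (1 - p * β) / (p * σ * lam)
     let K : Matrix (Fin 2) (Fin 2) ℝ := !![p, 1 - p; 0, 1]
     let ε : Fin 2 → ℝ := ![σ * p * rL, 0]
     (∃ pihat xhat : Fin 2 → ℝ,
        (∀ i, pihat i = β * (K.mulVec pihat) i + lam * xhat i) ∧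
        (∀ i, xhat i = (K.mulVec xhat) i
            - σ * (max (-μ) (ψ * pihat i) - (K.mulVec pihat) i) + ε i))
       ↔ ((1 < θ ∧ 0 ≤ μ) ∨
          (θ ≤ 1 ∧ 0 ≤ μ ∧ -rL ≤ μ * ((ψ - p) / (ψ * p) + θ / ψ)))) := by
  exact nk_aux β σ lam ψ p μ rL hβ.1 hβ.2 hσ hlam hψ hp.1 hp.2 hrL
end

section
/- Let β ∈ (0,1), σ > 0, λ > 0, γ > 0, p ∈ (0,1), μ ∈ ℝ, and r^L < 0. Set θ := (1−p)(1−pβ)/(pσλ), K := [[p, 1−p],[0, 1]], and ε := (σ p r^L, 0)ᵀ. Call a triple (π̂, x̂, R̂) ∈ ℝ² × ℝ² × ℝ² an MSV solution under optimal discretionary policy if π̂ = βKπ̂ + λx̂, x̂ = Kx̂ − σ(R̂ − Kπ̂) + ε, and for each state i ∈ {1,2} either (R̂_i > −μ and γx̂_i + λπ̂_i = 0) or (R̂_i = −μ and γx̂_i + λπ̂_i ≤ 0). Then an MSV solution exists if and only if either (θ > 1 and μ ≥ 0) or (θ ≤ 1 and μ ≥ 0 and −r^L ≤ μ/p). -/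
set_option maxHeartbeats 4000000


open Matrix

private lemma nk_mulVec0 (p : ℝ) (v : Fin 2 → ℝ) :
    (!![p, 1-p; 0, 1]).mulVec v 0 = p * v 0 + (1-p) * v 1 := by
  simp [Matrix.mulVec, dotProduct, Fin.sum_univ_two, Matrix.vecHead, Matrix.vecTail]

private lemma nk_mulVec1 (p : ℝ) (v : Fin 2 → ℝ) :
    (!![p, 1-p; 0, 1]).mulVec v 1 = v 1 := by
  simp [Matrix.mulVec, dotProduct, Fin.sum_univ_two, Matrix.vecHead, Matrix.vecTail]

private lemma nk_aux7 (β σ lam γ p : ℝ) (hσ : 0 < σ) (hlam : 0 < lam) (hγ : 0 < γ)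
    (hβ0 : 0 < β) (hβ1 : β < 1) (hp0 : 0 < p) (hp1 : p < 1) :
    0 < (γ*(1-p*β)+lam^2) * (p*σ*lam)
      - p*((γ*(1-β)+lam^2) * (p*σ*lam - (1-p)*(1-p*β))) := by
  have hpβ : p * β < 1 := by nlinarith
  have t1 : 0 < p*σ*lam*((γ+lam^2)*(1-p)) :=
    mul_pos (by positivity) (mul_pos (by positivity) (by linarith))
  have t2 : 0 ≤ p*((1-p)*(1-p*β))*(γ*(1-β)+lam^2) := by
    have hN0 : (0:ℝ) ≤ (1-p)*(1-p*β) := mul_nonneg (by linarith) (by linarith)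
    have hcb : (0:ℝ) ≤ γ*(1-β)+lam^2 := by nlinarith
    exact mul_nonneg (mul_nonneg hp0.le hN0) hcb
  nlinarith [t1, t2]

private lemma nk_aux_final (A X μ p rL : ℝ) (hX : 0 < X) (hrL : rL < 0)
    (h6 : A * (-rL) ≤ μ * X) (h7 : 0 < A - p * X) : -rL * p ≤ μ := by
  nlinarith [mul_pos h7 (neg_pos.mpr hrL), h6, hX]

/-- Existence of a minimum state variable (Markov-perfect) solution in the New
Keynesian model under optimal discretionary policy with a two-state
(transitory/absorbing) discount factor shock: an MSV solution exists iff either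
(`θ > 1` and `μ ≥ 0`) or (`θ ≤ 1`, `μ ≥ 0` and `−r^L ≤ μ/p`). -/
theorem nk_optimal_msv_exists_iff (β σ lam γ p μ rL : ℝ)
    (hβ : β ∈ Set.Ioo (0:ℝ) 1) (hσ : 0 < σ) (hlam : 0 < lam) (hγ : 0 < γ)
    (hp : p ∈ Set.Ioo (0:ℝ) 1) (hrL : rL < 0) :
    (let θ : ℝ := (1 - p) * (1 - p * β) / (p * σ * lam)
     let K : Matrix (Fin 2) (Fin 2) ℝ := !![p, 1 - p; 0, 1]
     let ε : Fin 2 → ℝ := ![σ * p * rL, 0]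
     (∃ pihat xhat Rhat : Fin 2 → ℝ,
        (∀ i, pihat i = β * (K.mulVec pihat) i + lam * xhat i) ∧
        (∀ i, xhat i = (K.mulVec xhat) i
            - σ * (Rhat i - (K.mulVec pihat) i) + ε i) ∧
        (∀ i, (-μ < Rhat i ∧ γ * xhat i + lam * pihat i = 0) ∨
              (Rhat i = -μ ∧ γ * xhat i + lam * pihat i ≤ 0)))
       ↔ ((1 < θ ∧ 0 ≤ μ) ∨ (θ ≤ 1 ∧ 0 ≤ μ ∧ -rL ≤ μ / p))) := by
  obtain ⟨hβ0, hβ1⟩ := hβ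
  obtain ⟨hp0, hp1⟩ := hp
  intro θ K ε
  have hθeq : θ = (1 - p) * (1 - p * β) / (p * σ * lam) := rfl
  have hK : K = !![p, 1-p; 0, 1] := rfl
  have hε0 : ε 0 = σ * p * rL := rfl
  have hε1 : ε 1 = (0:ℝ) := rfl
  have hpσl : 0 < p * σ * lam := by positivity
  have hpβ : p * β < 1 := by nlinarith
  constructor
  · rintro ⟨π, x, R, h1, h2, h3⟩
    have e11 : π 1 = β * π 1 + lam * x 1 := by
      have := h1 1; rwa [hK, nk_mulVec1] at this
    have e21 : x 1 = x 1 - σ * (R 1 - π 1) + 0 := by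
      have := h2 1; rwa [hK, nk_mulVec1, nk_mulVec1, hε1] at this
    have hR1 : R 1 = π 1 := by nlinarith [e21]
    have hx2 : lam * x 1 = (1 - β) * π 1 := by linarith
    have hμ : 0 ≤ μ ∧ (π 1 = 0 ∨ π 1 = -μ) := by
      rcases h3 1 with ⟨hRgt, htar⟩ | ⟨hRe, hle⟩
      · have hc0 : (γ*(1-β)+lam^2) * π 1 = 0 := by
          linear_combination lam * htar - γ * hx2
        have hcpos : (0:ℝ) < γ*(1-β)+lam^2 := by nlinarith
        have hpi2 : π 1 = 0 := by
          rcases mul_eq_zero.mp hc0 with h | h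
          · exact absurd h (ne_of_gt hcpos)
          · exact h
        refine ⟨?_, Or.inl hpi2⟩
        rw [hR1, hpi2] at hRgt; linarith
      · have hpi2 : π 1 = -μ := by rw [← hR1, hRe]
        refine ⟨?_, Or.inr hpi2⟩
        rw [hpi2] at hx2 hle
        have h9 : γ*(lam * x 1) = γ*((1-β)*(-μ)) := by rw [hx2]
        nlinarith [mul_nonneg hlam.le (neg_nonneg.mpr hle), h9,
          mul_pos hγ (by linarith : (0:ℝ) < 1-β), mul_pos hlam hlam]
    obtain ⟨hμ0, hπ2cases⟩ := hμ
    have hπ2le : π 1 ≤ 0 := by rcases hπ2cases with h | h <;> rw [h] <;> linarith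
    have hx2le : x 1 ≤ 0 := by nlinarith [hx2, hπ2le]
    have e10 : π 0 = β * (p * π 0 + (1-p) * π 1) + lam * x 0 := by
      have := h1 0; rwa [hK, nk_mulVec0] at this
    have e20 : x 0 = (p * x 0 + (1-p) * x 1)
        - σ * (R 0 - (p * π 0 + (1-p) * π 1)) + σ * p * rL := by
      have := h2 0; rwa [hK, nk_mulVec0, nk_mulVec0, hε0] at this
    have hpol0 := h3 0
    clear h1 h2 h3 hK hε0 hε1
    clear K ε
    by_cases hθ1 : 1 < θ
    · exact Or.inl ⟨hθ1, hμ0⟩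
    · have hθle' : θ ≤ 1 := le_of_not_gt hθ1
      refine Or.inr ⟨hθle', hμ0, ?_⟩
      have hθle : (1-p)*(1-p*β) ≤ p*σ*lam := by
        rw [hθeq, div_le_one hpσl] at hθle'; exact hθle'
      rw [le_div_iff₀ hp0]
      -- goal : -rL * p ≤ μ
      rcases hpol0 with ⟨hR0, ht0⟩ | ⟨hR0, ht0⟩
      · -- interior at state 1
        have hA : (γ*(1-p*β)+lam^2) * π 0 = β*γ*(1-p) * π 1 := by
          linear_combination γ * e10 + lam * ht0
        have hcpos : (0:ℝ) < γ*(1-p*β)+lam^2 := by nlinarith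
        have hπ0le : π 0 ≤ 0 := by
          nlinarith [hA, hcpos, mul_nonneg (mul_nonneg hβ0.le hγ.le) (mul_nonneg (by linarith : (0:ℝ) ≤ 1-p) (neg_nonneg.mpr hπ2le))]
        have hx0ge : 0 ≤ x 0 := by nlinarith [ht0, hπ0le]
        have hAeq : (1-p)*(x 0 - x 1) = σ*(-R 0 + p*π 0 + (1-p)*π 1 + p*rL) := by
          linear_combination e20
        have hB : 0 ≤ (1-p)*(x 0 - x 1) :=
          mul_nonneg (by linarith) (by linarith)
        have hC : σ*(-μ) < σ*(R 0) := by
          exact (mul_lt_mul_iff_right₀ hσ).mpr hR0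
        have hD : σ*p*π 0 ≤ 0 :=
          mul_nonpos_of_nonneg_of_nonpos (by positivity) hπ0le
        have hE : σ*(1-p)*π 1 ≤ 0 :=
          mul_nonpos_of_nonneg_of_nonpos (mul_nonneg hσ.le (by linarith)) hπ2le
        nlinarith [hAeq, hB, hC, hD, hE, hσ]
      · -- ZLB at state 1 : R 0 = -μ
        rcases hπ2cases with hz | hm
        · -- π 1 = 0
          have hx20 : x 1 = 0 := by
            rw [hz] at hx2; simpa using (mul_eq_zero.mp (by linarith : lam * x 1 = 0)).resolve_left (ne_of_gt hlam)
          rw [hz] at e10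
          rw [hR0, hz, hx20] at e20
          have hx0 : lam * x 0 = (1-p*β) * π 0 := by linear_combination -e10
          have key : (γ*(1-p*β)+lam^2) * π 0 ≤ 0 := by
            nlinarith [mul_nonneg hlam.le (neg_nonneg.mpr ht0), hx0, hγ]
          have hcpos : (0:ℝ) < γ*(1-p*β)+lam^2 := by nlinarith
          have hπ0le : π 0 ≤ 0 := by nlinarith [key, hcpos]
          have E : ((1-p)*(1-p*β) - p*σ*lam) * π 0 = lam*σ*(μ + p*rL) := by
            linear_combination lam * e20 - (1-p) * hx0
          nlinarith [E, mul_nonneg (by linarith : (0:ℝ) ≤ p*σ*lam - (1-p)*(1-p*β)) (neg_nonneg.mpr hπ0le), mul_pos hσ hlam]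
        · -- π 1 = -μ
          rw [hm] at hx2 e10
          rw [hR0, hm] at e20
          have hx0 : lam * x 0 = (1-p*β) * π 0 + β*(1-p)*μ := by
            linear_combination -e10
          have E : (1-p)*(1-p*β)*(π 0 + μ) = p*σ*lam*(π 0 + μ + rL) := by
            linear_combination lam * e20 - (1-p) * hx0 + (1-p) * hx2
          have hNlt : (1-p)*(1-p*β) < p*σ*lam := by
            rcases lt_or_eq_of_le hθle with h | h
            · exact h
            · exfalso
              rw [h] at E
              nlinarith [E, hpσl, hrL]
          have hB : γ*((1-p*β)*π 0 + β*(1-p)*μ) + lam^2*π 0 ≤ 0 := by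
            nlinarith [mul_nonneg hlam.le (neg_nonneg.mpr ht0), hx0, hγ]
          have hc' : (0:ℝ) < γ*(1-p*β)+lam^2 := by nlinarith
          have hcb : (0:ℝ) < γ*(1-β)+lam^2 := by nlinarith
          have h5 : (γ*(1-p*β)+lam^2)*(π 0 + μ) ≤ (γ*(1-β)+lam^2)*μ := by
            nlinarith [hB]
          have hE2 : (p*σ*lam - (1-p)*(1-p*β)) * (π 0 + μ) = p*σ*lam*(-rL) := by
            linear_combination -E
          have hstep : 0 ≤ ((γ*(1-β)+lam^2)*μ - (γ*(1-p*β)+lam^2)*(π 0 + μ))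
              * (p*σ*lam - (1-p)*(1-p*β)) :=
            mul_nonneg (by linarith [h5]) (by linarith)
          have h6 : (γ*(1-p*β)+lam^2) * (p*σ*lam) * (-rL)
              ≤ μ * ((γ*(1-β)+lam^2) * (p*σ*lam - (1-p)*(1-p*β))) := by
            nlinarith [hstep, hE2, hc']
          have h7 := nk_aux7 β σ lam γ p hσ hlam hγ hβ0 hβ1 hp0 hp1
          have hX : 0 < (γ*(1-β)+lam^2) * (p*σ*lam - (1-p)*(1-p*β)) :=
            mul_pos hcb (by linarith)
          exact nk_aux_final _ _ _ _ _ hX hrL h6 h7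
  · intro h
    have hμ : 0 ≤ μ := by rcases h with ⟨_, h⟩ | ⟨_, h, _⟩ <;> exact h
    by_cases hc : -rL ≤ μ / p
    · -- zero solution with R = ![p*rL, 0]
      have hple : -μ ≤ p * rL := by
        have := (le_div_iff₀ hp0).mp hc; linarith
      refine ⟨fun _ => 0, fun _ => 0, ![p*rL, 0], fun i => ?_, fun i => ?_, fun i => ?_⟩
      · fin_cases i <;> rw [hK] <;>
          simp [nk_mulVec0, nk_mulVec1]
      · fin_cases i <;> rw [hK] <;>
          simp [nk_mulVec0, nk_mulVec1, hε0, hε1] <;> ring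
      · fin_cases i
        · simp only [Fin.zero_eta, Matrix.cons_val_zero]
          rcases lt_or_eq_of_le hple with h' | h'
          · exact Or.inl ⟨h', by ring⟩
          · exact Or.inr ⟨h'.symm, by norm_num⟩
        · simp only [Fin.mk_one, Matrix.cons_val_one, Matrix.head_cons, Matrix.cons_val_zero]
          rcases eq_or_lt_of_le hμ with h' | h'
          · exact Or.inr ⟨by rw [← h']; norm_num, by norm_num⟩
          · exact Or.inl ⟨by linarith, by ring⟩
    · -- ZLB solution
      have hθgt : 1 < θ := by
        rcases h with ⟨h', _⟩ | ⟨_, _, h'⟩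
        · exact h'
        · exact absurd h' hc
      have hDd : 0 < (1-p)*(1-p*β) - p*σ*lam := by
        rw [hθeq, lt_div_iff₀ hpσl] at hθgt; linarith
      have hμrL : μ + p * rL < 0 := by
        rw [not_le, div_lt_iff₀ hp0] at hc
        nlinarith [hc]
      obtain ⟨Dd, hDdef⟩ : ∃ d : ℝ, d = (1-p)*(1-p*β) - p*σ*lam := ⟨_, rfl⟩
      obtain ⟨π1, hπ1def⟩ : ∃ z : ℝ, z = σ*lam*(μ + p*rL)/Dd := ⟨_, rfl⟩
      obtain ⟨x1, hx1def⟩ : ∃ z : ℝ, z = (1-p*β)*π1/lam := ⟨_, rfl⟩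
      rw [← hDdef] at hDd
      have hDd' : Dd ≠ 0 := ne_of_gt hDd
      have hπ1neg : π1 < 0 := by
        rw [hπ1def]
        exact div_neg_of_neg_of_pos
          (by nlinarith [mul_pos hσ hlam]) hDd
      have hx1neg : x1 < 0 := by
        rw [hx1def]
        exact div_neg_of_neg_of_pos
          (mul_neg_of_pos_of_neg (by nlinarith) hπ1neg) hlam
      have hx1lam : lam * x1 = (1-p*β) * π1 := by
        rw [hx1def]; field_simp
      have hπ1Dd : Dd * π1 = σ*lam*(μ + p*rL) := by
        rw [hπ1def]; field_simp
      have hkey : (1-p) * (lam * x1) = lam * (σ*(μ + p*π1) + σ*p*rL) := by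
        linear_combination (1-p)*hx1lam + hπ1Dd - π1 * hDdef
      refine ⟨![π1, 0], ![x1, 0], ![-μ, 0], fun i => ?_, fun i => ?_, fun i => ?_⟩
      · fin_cases i <;> simp only [Fin.zero_eta, Fin.mk_one] <;> rw [hK]
        · rw [nk_mulVec0]
          simp only [Matrix.cons_val_zero, Matrix.cons_val_one, Matrix.head_cons]
          linear_combination -hx1lam
        · rw [nk_mulVec1]
          simp only [Matrix.cons_val_one, Matrix.head_cons, Matrix.cons_val_zero]
          ring
      · fin_cases i <;> simp only [Fin.zero_eta, Fin.mk_one] <;> rw [hK]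
        · rw [nk_mulVec0, nk_mulVec0, hε0]
          simp only [Matrix.cons_val_zero, Matrix.cons_val_one, Matrix.head_cons]
          refine mul_left_cancel₀ (ne_of_gt hlam) ?_
          linear_combination hkey
        · rw [nk_mulVec1, nk_mulVec1, hε1]
          simp only [Matrix.cons_val_one, Matrix.head_cons, Matrix.cons_val_zero]
          ring
      · fin_cases i
        · refine Or.inr ⟨by simp, ?_⟩
          simp only [Fin.zero_eta, Matrix.cons_val_zero]
          nlinarith [mul_pos hγ (neg_pos.mpr hx1neg), mul_pos hlam (neg_pos.mpr hπ1neg)]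
        · simp only [Fin.mk_one, Matrix.cons_val_one, Matrix.head_cons, Matrix.cons_val_zero]
          rcases eq_or_lt_of_le hμ with h' | h'
          · exact Or.inr ⟨by rw [← h']; norm_num, by norm_num⟩
          · exact Or.inl ⟨by linarith, by ring⟩
end

section
/- Let p, q ∈ [0,1], β ∈ (0,1), σ > 0, λ > 0, ψ > 0. Define K := [[p, 1−p],[1−q, q]], Q := I₂ − K − β(I₂ − K)K − λσK, ψ* := p + q − 1 − (2 − p − q)(1 − (p + q − 1)β)/(σλ), e₁ := (1,0)ᵀ, e₂ := (0,1)ᵀ, and A₁ := Q + λσψ I₂, A₂ := Q + λσψ e₂e₂ᵀ, A₃ := Q + λσψ e₁e₁ᵀ, A₄ := Q. Then det A₁, det A₂, det A₃, det A₄ are all nonzero with the same sign if and only if either (ψ* < 0 and ψ* < ψ < 1) or (ψ* > 0 and ψ < ψ*). -/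
open Matrix

private lemma nk_key (p q ψ ψs x y : ℝ) (hp0 : 0 ≤ p) (hp1 : p ≤ 1) (hq0 : 0 ≤ q)
    (hq1 : q ≤ 1) (hψ : 0 < ψ) (hx : 0 ≤ x) (hy : 0 ≤ y)
    (hs : ψs = p + q - 1 - x - y) :
    ((0 < (ψs - ψ) * (1 - ψ) ∧ 0 < ψs + ψ * (x - p) ∧ 0 < ψs + ψ * (y - q) ∧ 0 < ψs) ∨
     ((ψs - ψ) * (1 - ψ) < 0 ∧ ψs + ψ * (x - p) < 0 ∧ ψs + ψ * (y - q) < 0 ∧ ψs < 0)) ↔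
    ((ψs < 0 ∧ ψs < ψ ∧ ψ < 1) ∨ (0 < ψs ∧ ψ < ψs)) := by
  have hs1 : ψs ≤ 1 := by nlinarith
  constructor
  · rintro (⟨h1, h2, h3, h4⟩ | ⟨h1, h2, h3, h4⟩)
    · right
      have hψ1 : ψ < 1 := by
        by_contra hcon
        push_neg at hcon
        nlinarith [mul_nonneg hψ.le (show (0:ℝ) ≤ 1 - q + y by linarith),
          mul_nonneg (show (0:ℝ) ≤ ψ - 1 by linarith) h4.le]
      refine ⟨h4, ?_⟩
      nlinarith
    · left
      refine ⟨h4, by linarith, ?_⟩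
      by_contra hcon
      push_neg at hcon
      nlinarith [mul_nonneg (show (0:ℝ) ≤ ψ - ψs by linarith)
        (show (0:ℝ) ≤ ψ - 1 by linarith)]
  · rintro (⟨h4, hlo, hhi⟩ | ⟨h4, hhi⟩)
    · refine Or.inr ⟨by nlinarith, ?_, ?_, h4⟩
      · nlinarith [mul_nonneg hψ.le (show (0:ℝ) ≤ 1 - q + y by linarith),
          mul_pos (show (0:ℝ) < 1 - ψ by linarith) (show (0:ℝ) < -ψs by linarith)]
      · nlinarith [mul_nonneg hψ.le (show (0:ℝ) ≤ 1 - p + x by linarith),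
          mul_pos (show (0:ℝ) < 1 - ψ by linarith) (show (0:ℝ) < -ψs by linarith)]
    · have hψ1 : ψ < 1 := lt_of_lt_of_le hhi hs1
      refine Or.inl ⟨by nlinarith, ?_, ?_, h4⟩
      · nlinarith [mul_nonneg hψ.le hx, mul_nonneg hψ.le (show (0:ℝ) ≤ 1 - p by linarith)]
      · nlinarith [mul_nonneg hψ.le hy, mul_nonneg hψ.le (show (0:ℝ) ≤ 1 - q by linarith)]

/-- Coherency and completeness condition for the New Keynesian model with
Taylor rule coefficient `ψ` and a two-state Markov demand shock: the four
regime-configuration determinants are all nonzero with the same sign iff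
either (`ψ* < 0` and `ψ* < ψ < 1`) or (`ψ* > 0` and `ψ < ψ*`). -/
theorem nk_cc_condition_iff (p q β σ lam ψ : ℝ)
    (hp : p ∈ Set.Icc (0:ℝ) 1) (hq : q ∈ Set.Icc (0:ℝ) 1)
    (hβ : β ∈ Set.Ioo (0:ℝ) 1) (hσ : 0 < σ) (hlam : 0 < lam) (hψ : 0 < ψ) :
    (let K : Matrix (Fin 2) (Fin 2) ℝ := !![p, 1 - p; 1 - q, q]
     let Q : Matrix (Fin 2) (Fin 2) ℝ := 1 - K - β • ((1 - K) * K) - (lam * σ) • K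
     let ψs : ℝ := p + q - 1 - (2 - p - q) * (1 - (p + q - 1) * β) / (σ * lam)
     let A₁ : Matrix (Fin 2) (Fin 2) ℝ := Q + (lam * σ * ψ) • (1 : Matrix (Fin 2) (Fin 2) ℝ)
     let A₂ : Matrix (Fin 2) (Fin 2) ℝ := Q + (lam * σ * ψ) • !![(0:ℝ), 0; 0, 1]
     let A₃ : Matrix (Fin 2) (Fin 2) ℝ := Q + (lam * σ * ψ) • !![(1:ℝ), 0; 0, 0]
     let A₄ : Matrix (Fin 2) (Fin 2) ℝ := Q
     (((0 < A₁.det ∧ 0 < A₂.det ∧ 0 < A₃.det ∧ 0 < A₄.det) ∨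
       (A₁.det < 0 ∧ A₂.det < 0 ∧ A₃.det < 0 ∧ A₄.det < 0)) ↔
      ((ψs < 0 ∧ ψs < ψ ∧ ψ < 1) ∨ (0 < ψs ∧ ψ < ψs)))) := by
  obtain ⟨hp0, hp1⟩ := hp
  obtain ⟨hq0, hq1⟩ := hq
  obtain ⟨hβ0, hβ1⟩ := hβ
  have hc : (0:ℝ) < lam * σ := mul_pos hlam hσ
  have hμ : (0:ℝ) < 1 - (p + q - 1) * β := by nlinarith
  intro K Q ψs A₁ A₂ A₃ A₄
  set x : ℝ := (1 - (p + q - 1) * β) * (1 - p) / (lam * σ) with hxdef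
  set y : ℝ := (1 - (p + q - 1) * β) * (1 - q) / (lam * σ) with hydef
  have hx : 0 ≤ x := div_nonneg (mul_nonneg hμ.le (by linarith)) hc.le
  have hy : 0 ≤ y := div_nonneg (mul_nonneg hμ.le (by linarith)) hc.le
  have hs : ψs = p + q - 1 - x - y := by
    show p + q - 1 - (2 - p - q) * (1 - (p + q - 1) * β) / (σ * lam) = _
    rw [hxdef, hydef]
    field_simp
    ring
  have d1 : A₁.det = (lam * σ)^2 * ((ψs - ψ) * (1 - ψ)) := by
    show (Q + (lam * σ * ψ) • (1 : Matrix (Fin 2) (Fin 2) ℝ)).det = _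
    simp only [Q, K, ψs, Matrix.det_fin_two, Matrix.mul_apply, Fin.sum_univ_two,
      Matrix.add_apply, Matrix.sub_apply, Matrix.smul_apply, Matrix.one_apply,
      Matrix.of_apply, Matrix.cons_val', Matrix.cons_val_zero, Matrix.cons_val_one,
      Matrix.head_cons, Matrix.empty_val', Matrix.cons_val_fin_one, Matrix.head_fin_const,
      smul_eq_mul, if_true, Fin.zero_eq_one_iff, Fin.one_eq_zero_iff, if_false,
      Nat.reduceEqDiff]
    field_simp
    ring
  have d2 : A₂.det = (lam * σ)^2 * (ψs + ψ * (x - p)) := by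
    show (Q + (lam * σ * ψ) • !![(0:ℝ), 0; 0, 1]).det = _
    simp only [Q, K, ψs, Matrix.det_fin_two, Matrix.mul_apply, Fin.sum_univ_two,
      Matrix.add_apply, Matrix.sub_apply, Matrix.smul_apply, Matrix.one_apply,
      Matrix.of_apply, Matrix.cons_val', Matrix.cons_val_zero, Matrix.cons_val_one,
      Matrix.head_cons, Matrix.empty_val', Matrix.cons_val_fin_one, Matrix.head_fin_const,
      smul_eq_mul, if_true, Fin.zero_eq_one_iff, Fin.one_eq_zero_iff, if_false,
      Nat.reduceEqDiff]
    rw [hxdef]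
    field_simp
    ring
  have d3 : A₃.det = (lam * σ)^2 * (ψs + ψ * (y - q)) := by
    show (Q + (lam * σ * ψ) • !![(1:ℝ), 0; 0, 0]).det = _
    simp only [Q, K, ψs, Matrix.det_fin_two, Matrix.mul_apply, Fin.sum_univ_two,
      Matrix.add_apply, Matrix.sub_apply, Matrix.smul_apply, Matrix.one_apply,
      Matrix.of_apply, Matrix.cons_val', Matrix.cons_val_zero, Matrix.cons_val_one,
      Matrix.head_cons, Matrix.empty_val', Matrix.cons_val_fin_one, Matrix.head_fin_const,
      smul_eq_mul, if_true, Fin.zero_eq_one_iff, Fin.one_eq_zero_iff, if_false,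
      Nat.reduceEqDiff]
    rw [hydef]
    field_simp
    ring
  have d4 : A₄.det = (lam * σ)^2 * ψs := by
    show Q.det = _
    simp only [Q, K, ψs, Matrix.det_fin_two, Matrix.mul_apply, Fin.sum_univ_two,
      Matrix.add_apply, Matrix.sub_apply, Matrix.smul_apply, Matrix.one_apply,
      Matrix.of_apply, Matrix.cons_val', Matrix.cons_val_zero, Matrix.cons_val_one,
      Matrix.head_cons, Matrix.empty_val', Matrix.cons_val_fin_one, Matrix.head_fin_const,
      smul_eq_mul, if_true, Fin.zero_eq_one_iff, Fin.one_eq_zero_iff, if_false,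
      Nat.reduceEqDiff]
    field_simp
    ring
  have hcsq : (0:ℝ) < (lam * σ)^2 := by positivity
  have hposiff : ∀ t : ℝ, (0 < (lam * σ)^2 * t ↔ 0 < t) := by
    intro t
    constructor <;> intro h <;> nlinarith
  have hnegiff : ∀ t : ℝ, ((lam * σ)^2 * t < 0 ↔ t < 0) := by
    intro t
    constructor <;> intro h <;> nlinarith
  rw [d1, d2, d3, d4, hposiff, hposiff, hposiff, hposiff, hnegiff, hnegiff, hnegiff, hnegiff]
  exact nk_key p q ψ ψs x y hp0 hp1 hq0 hq1 hψ hx hy hs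
end

section
/- Let p ∈ (0,1), β ∈ (0,1), σ > 0, λ > 0, ξ > 0, ψ > 0. Define K := [[p, 1−p],[0, 1]], Q := I₂ − K − β(I₂ − K)K − λσK, ψ* := p − (1−p)(1−βp)/(σλ), and for each J ⊆ {1,2} the matrix U_J := Q + λσξψ I₂ + λσ(1−ξ)ψ Σ_{i∈J} e_ie_iᵀ. Then the four determinants det U_J, J ⊆ {1,2}, are all nonzero with the same sign if and only if either ψ > max(1, 1/ξ), or max(ψ*, ψ*/ξ) < ψ < min(1, 1/ξ), or ψ < min(ψ*, ψ*/ξ). -/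
open Matrix

private lemma nk_key_s10 (s ξ ψ : ℝ) (hs : s < 1) (hξ : 0 < ξ) :
    ((0 < (ξ*ψ-s)*(ξ*ψ-1) ∧ 0 < (ψ-s)*(ξ*ψ-1) ∧ 0 < (ξ*ψ-s)*(ψ-1) ∧ 0 < (ψ-s)*(ψ-1)) ∨
     ((ξ*ψ-s)*(ξ*ψ-1) < 0 ∧ (ψ-s)*(ξ*ψ-1) < 0 ∧ (ξ*ψ-s)*(ψ-1) < 0 ∧ (ψ-s)*(ψ-1) < 0)) ↔
    (max 1 (1/ξ) < ψ ∨ (max s (s/ξ) < ψ ∧ ψ < min 1 (1/ξ)) ∨ ψ < min s (s/ξ)) := by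
  rw [max_lt_iff, max_lt_iff, lt_min_iff, lt_min_iff,
    div_lt_iff₀ hξ, div_lt_iff₀ hξ, lt_div_iff₀ hξ, lt_div_iff₀ hξ]
  constructor
  · rintro (⟨h1, h2, h3, h4⟩ | ⟨h1, h2, h3, h4⟩)
    · rcases mul_pos_iff.mp h4 with ⟨hA1, hB1⟩ | ⟨hA1, hB1⟩
      · have hB2 : 0 < ξ*ψ - 1 := by nlinarith
        have hA2 : 0 < ξ*ψ - s := by nlinarith
        exact Or.inl ⟨by linarith, by nlinarith⟩
      · have hB2 : ξ*ψ - 1 < 0 := by nlinarith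
        have hA2 : ξ*ψ - s < 0 := by nlinarith
        exact Or.inr (Or.inr ⟨by linarith, by nlinarith⟩)
    · rcases mul_neg_iff.mp h4 with ⟨hA1, hB1⟩ | ⟨hA1, hB1⟩
      · have hB2 : ξ*ψ - 1 < 0 := by nlinarith
        have hA2 : 0 < ξ*ψ - s := by nlinarith
        exact Or.inr (Or.inl ⟨⟨by linarith, by nlinarith⟩, by linarith, by nlinarith⟩)
      · exfalso; linarith
  · rintro (⟨h1, h2⟩ | ⟨⟨h1, h2⟩, h3, h4⟩ | ⟨h1, h2⟩)
    · exact Or.inl ⟨by nlinarith, by nlinarith, by nlinarith, by nlinarith⟩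
    · exact Or.inr ⟨by nlinarith, by nlinarith, by nlinarith, by nlinarith⟩
    · exact Or.inl ⟨by nlinarith, by nlinarith, by nlinarith, by nlinarith⟩

private lemma nk_sq_pos_iff {c z : ℝ} (hc : 0 < c) :
    (0 < c * z ↔ 0 < z) ∧ (c * z < 0 ↔ z < 0) := by
  constructor
  · constructor
    · intro h; nlinarith
    · intro h; exact mul_pos hc h
  · constructor
    · intro h; nlinarith
    · intro h; exact mul_neg_of_pos_of_neg hc h

/-- Coherency condition for the New Keynesian model with unconventional
monetary policy (shadow-rate pass-through `ξ`): the four regime-configuration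
determinants `det U_J`, `J ⊆ {1,2}`, are all nonzero with the same sign iff
`ψ > max(1, 1/ξ)`, or `max(ψ*, ψ*/ξ) < ψ < min(1, 1/ξ)`, or
`ψ < min(ψ*, ψ*/ξ)`. -/
theorem nk_ump_cc_condition_iff (p β σ lam ξ ψ : ℝ)
    (hp : p ∈ Set.Ioo (0:ℝ) 1) (hβ : β ∈ Set.Ioo (0:ℝ) 1)
    (hσ : 0 < σ) (hlam : 0 < lam) (hξ : 0 < ξ) (hψ : 0 < ψ) :
    (let K : Matrix (Fin 2) (Fin 2) ℝ := !![p, 1 - p; 0, 1]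
     let Q : Matrix (Fin 2) (Fin 2) ℝ := 1 - K - β • ((1 - K) * K) - (lam * σ) • K
     let ψs : ℝ := p - (1 - p) * (1 - β * p) / (σ * lam)
     let U : Finset (Fin 2) → Matrix (Fin 2) (Fin 2) ℝ := fun J =>
       Q + (lam * σ * ξ * ψ) • (1 : Matrix (Fin 2) (Fin 2) ℝ)
         + (lam * σ * (1 - ξ) * ψ) • (∑ i ∈ J, Matrix.single i i (1:ℝ))
     (((∀ J : Finset (Fin 2), 0 < (U J).det) ∨
       (∀ J : Finset (Fin 2), (U J).det < 0)) ↔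
      (max 1 (1 / ξ) < ψ ∨
       (max ψs (ψs / ξ) < ψ ∧ ψ < min 1 (1 / ξ)) ∨
       ψ < min ψs (ψs / ξ)))) := by
  intro K Q ψs U
  obtain ⟨hp0, hp1⟩ := hp
  obtain ⟨hβ0, hβ1⟩ := hβ
  have hσ' : σ ≠ 0 := ne_of_gt hσ
  have hlam' : lam ≠ 0 := ne_of_gt hlam
  have hc : (0:ℝ) < (lam*σ)^2 := by positivity
  -- ψs < 1
  have hβp : β * p < 1 := by nlinarith
  have hs : ψs < 1 := by
    have h1 : 0 < (1 - p) * (1 - β * p) / (σ * lam) := div_pos (by nlinarith) (by positivity)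
    simp only [ψs]; linarith
  -- determinant formulas
  have hdet : ∀ J : Finset (Fin 2), (U J).det =
      (lam*σ)^2 * (((if (0:Fin 2) ∈ J then ψ else ξ*ψ) - ψs) *
        ((if (1:Fin 2) ∈ J then ψ else ξ*ψ) - 1)) := by
    intro J
    fin_cases J <;>
      · simp only [U, Q, K, ψs, Matrix.det_fin_two]
        simp [Matrix.mul_apply, Fin.sum_univ_two, Matrix.single, Matrix.one_apply]
        field_simp
        ring
  have hiffpos : (∀ J : Finset (Fin 2), 0 < (U J).det) ↔
      (0 < (ξ*ψ-ψs)*(ξ*ψ-1) ∧ 0 < (ψ-ψs)*(ξ*ψ-1) ∧ 0 < (ξ*ψ-ψs)*(ψ-1) ∧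
        0 < (ψ-ψs)*(ψ-1)) := by
    constructor
    · intro h
      refine ⟨?_, ?_, ?_, ?_⟩
      · have := h ∅; rw [hdet] at this; simpa using (nk_sq_pos_iff hc).1.mp this
      · have := h {0}; rw [hdet] at this; simpa using (nk_sq_pos_iff hc).1.mp this
      · have := h {1}; rw [hdet] at this; simpa using (nk_sq_pos_iff hc).1.mp this
      · have := h {0, 1}; rw [hdet] at this; simpa using (nk_sq_pos_iff hc).1.mp this
    · rintro ⟨h1, h2, h3, h4⟩ J
      rw [hdet]
      apply (nk_sq_pos_iff hc).1.mpr
      fin_cases J <;> simpa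
  have hiffneg : (∀ J : Finset (Fin 2), (U J).det < 0) ↔
      ((ξ*ψ-ψs)*(ξ*ψ-1) < 0 ∧ (ψ-ψs)*(ξ*ψ-1) < 0 ∧ (ξ*ψ-ψs)*(ψ-1) < 0 ∧
        (ψ-ψs)*(ψ-1) < 0) := by
    constructor
    · intro h
      refine ⟨?_, ?_, ?_, ?_⟩
      · have := h ∅; rw [hdet] at this; simpa using (nk_sq_pos_iff hc).2.mp this
      · have := h {0}; rw [hdet] at this; simpa using (nk_sq_pos_iff hc).2.mp this
      · have := h {1}; rw [hdet] at this; simpa using (nk_sq_pos_iff hc).2.mp this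
      · have := h {0, 1}; rw [hdet] at this; simpa using (nk_sq_pos_iff hc).2.mp this
    · rintro ⟨h1, h2, h3, h4⟩ J
      rw [hdet]
      apply (nk_sq_pos_iff hc).2.mpr
      fin_cases J <;> simpa
  rw [hiffpos, hiffneg]
  exact nk_key_s10 ψs ξ ψ hs hξ
end

section
/- Let p, q, β, σ, λ, ψ, ψ_x ∈ ℝ with σλ ≠ 0. Define K := [[p, 1−p],[1−q, q]], Q := I₂ − K − β(I₂ − K)K − λσK, ψ* := p + q − 1 − (2 − p − q)(1 − (p + q − 1)β)/(σλ), M := ψ I₂ − (ψ_x/λ)(I₂ − βK), and A₁ := Q + λσM, A₂ := Q + λσM e₂e₂ᵀ, A₃ := Q + λσM e₁e₁ᵀ, A₄ := Q. Then: det A₁ = σ²λ²(ψ − 1 + ((β−1)/λ)ψ_x)(ψ − ψ* − ψ_x(1 + β(1−p−q))/λ); det A₂ = −σ²λ²ψ*(ψ − 1 + ((β−1)/λ)ψ_x) + σ(1−q)[σλβψ_x + λ(β(p+q−1) − 1 − σλ)(((β−1)/λ)ψ_x + ψ)]; det A₃ = −σ²λ²(ψ − ψ* − ψ_x(1 + β(1−p−q))/λ)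 − σ(1−q)[(1 − (p+q)β + σλ − β²(1−p−q))ψ_x − λψ(1 + σλ + β(1−p−q))]; and det A₄ = σ²λ²ψ*. -/
open Matrix

/-- Closed-form determinant identities for the four regime-configuration
coefficient matrices of the piecewise linear MSV system of the three-equation
New Keynesian model with Taylor rule `R̂_t = max{−μ, ψπ̂_t + ψ_x x̂_t}` and a
two-state Markov demand shock. -/
theorem nk_det_identities (p q β σ lam ψ ψx : ℝ) (h : σ * lam ≠ 0) :
    (let K : Matrix (Fin 2) (Fin 2) ℝ := !![p, 1 - p; 1 - q, q]
     let Q : Matrix (Fin 2) (Fin 2) ℝ := 1 - K - β • ((1 - K) * K) - (lam * σ) • K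
     let ψs : ℝ := p + q - 1 - (2 - p - q) * (1 - (p + q - 1) * β) / (σ * lam)
     let M : Matrix (Fin 2) (Fin 2) ℝ :=
       ψ • (1 : Matrix (Fin 2) (Fin 2) ℝ)
         - (ψx / lam) • ((1 : Matrix (Fin 2) (Fin 2) ℝ) - β • K)
     let A₁ : Matrix (Fin 2) (Fin 2) ℝ := Q + (lam * σ) • M
     let A₂ : Matrix (Fin 2) (Fin 2) ℝ := Q + (lam * σ) • (M * !![(0:ℝ), 0; 0, 1])
     let A₃ : Matrix (Fin 2) (Fin 2) ℝ := Q + (lam * σ) • (M * !![(1:ℝ), 0; 0, 0])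
     let A₄ : Matrix (Fin 2) (Fin 2) ℝ := Q
     A₁.det = σ ^ 2 * lam ^ 2 * (ψ - 1 + ((β - 1) / lam) * ψx)
                * (ψ - ψs - ψx * (1 + β * (1 - p - q)) / lam) ∧
     A₂.det = -(σ ^ 2 * lam ^ 2) * ψs * (ψ - 1 + ((β - 1) / lam) * ψx)
                + σ * (1 - q) * (σ * lam * β * ψx
                    + lam * (β * (p + q - 1) - 1 - σ * lam)
                        * (((β - 1) / lam) * ψx + ψ)) ∧
     A₃.det = -(σ ^ 2 * lam ^ 2) * (ψ - ψs - ψx * (1 + β * (1 - p - q)) / lam)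
                - σ * (1 - q) * ((1 - (p + q) * β + σ * lam
                      - β ^ 2 * (1 - p - q)) * ψx
                    - lam * ψ * (1 + σ * lam + β * (1 - p - q))) ∧
     A₄.det = σ ^ 2 * lam ^ 2 * ψs) := by
  have hσ : σ ≠ 0 := fun h0 => h (by simp [h0])
  have hlam : lam ≠ 0 := fun h0 => h (by simp [h0])
  simp only [Matrix.det_fin_two, Matrix.add_apply, Matrix.sub_apply, Matrix.smul_apply,
    Matrix.mul_apply, Fin.sum_univ_two, Matrix.one_apply, Matrix.cons_val', Matrix.cons_val_zero,
    Matrix.cons_val_one, Matrix.head_cons, Matrix.head_fin_const, Matrix.empty_val',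
    Matrix.cons_val_fin_one, smul_eq_mul]
  norm_num
  refine ⟨?_, ?_, ?_, ?_⟩ <;> field_simp <;> ring
end

section
/- Let p, q ∈ ℝ, β, σ, λ, γ ∈ ℝ with γ ≠ 0 and σλ ≠ 0. Define K := [[p, 1−p],[1−q, q]], Q := I₂ − K − β(I₂ − K)K − λσK, ψ* := p + q − 1 − (2 − p − q)(1 − (p + q − 1)β)/(σλ), and B₁ := (1 + λ²/γ)I₂ − βK, B₂ := I₂ − βK − e₁e₁ᵀ(K(I₂ − βK) + λσK) + (λ²/γ)e₂e₂ᵀ, B₃ := I₂ − βK − e₂e₂ᵀ(K(I₂ − βK) + λσK) + (λ²/γ)e₁e₁ᵀ, B₄ := Q. Then: det B₁ = (γ(1−β)+λ²)(γ(1+(1−p−q)β)+λ²)/γ²; det B₂ = −[(γ(1−β)+λ²)(σλψ* + (1−q)(1+(1−p−q)β)) + σλ(1−q)(γ+λ²)]/γ; det B₃ = −[(γ(1−β)+λ²)(σλψ* + (1−p)(1+(1−p−q)β)) + σλ(1−p)(γ+λ²)]/γ; and det B₄ = σ²λ²ψ*. -/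
open Matrix

/-- Closed-form determinant identities for the four regime-configuration
coefficient matrices of the piecewise linear MSV system of the New Keynesian
model under optimal discretionary policy with relative weight `γ` on output
stabilization and a two-state Markov demand shock. -/
theorem nk_op_det_identities (p q β σ lam γ : ℝ) (hγ : γ ≠ 0) (h : σ * lam ≠ 0) :
    (let K : Matrix (Fin 2) (Fin 2) ℝ := !![p, 1 - p; 1 - q, q]
     let Q : Matrix (Fin 2) (Fin 2) ℝ := 1 - K - β • ((1 - K) * K) - (lam * σ) • K
     let ψs : ℝ := p + q - 1 - (2 - p - q) * (1 - (p + q - 1) * β) / (σ * lam)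
     let E₁ : Matrix (Fin 2) (Fin 2) ℝ := !![1, 0; 0, 0]
     let E₂ : Matrix (Fin 2) (Fin 2) ℝ := !![0, 0; 0, 1]
     let B₁ : Matrix (Fin 2) (Fin 2) ℝ :=
       (1 + lam ^ 2 / γ) • (1 : Matrix (Fin 2) (Fin 2) ℝ) - β • K
     let B₂ : Matrix (Fin 2) (Fin 2) ℝ :=
       1 - β • K - E₁ * (K * (1 - β • K) + (lam * σ) • K) + (lam ^ 2 / γ) • E₂
     let B₃ : Matrix (Fin 2) (Fin 2) ℝ :=
       1 - β • K - E₂ * (K * (1 - β • K) + (lam * σ) • K) + (lam ^ 2 / γ) • E₁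
     let B₄ : Matrix (Fin 2) (Fin 2) ℝ := Q
     B₁.det = (γ * (1 - β) + lam ^ 2) * (γ * (1 + (1 - p - q) * β) + lam ^ 2) / γ ^ 2 ∧
     B₂.det = -((γ * (1 - β) + lam ^ 2)
                  * (σ * lam * ψs + (1 - q) * (1 + (1 - p - q) * β))
               + σ * lam * (1 - q) * (γ + lam ^ 2)) / γ ∧
     B₃.det = -((γ * (1 - β) + lam ^ 2)
                  * (σ * lam * ψs + (1 - p) * (1 + (1 - p - q) * β))
               + σ * lam * (1 - p) * (γ + lam ^ 2)) / γ ∧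
     B₄.det = σ ^ 2 * lam ^ 2 * ψs) := by
  refine ⟨?_, ?_, ?_, ?_⟩ <;>
  · simp only [det_fin_two, Matrix.sub_apply, Matrix.add_apply, Matrix.smul_apply,
      Matrix.mul_apply, Matrix.one_apply, Fin.sum_univ_two, Matrix.cons_val',
      Matrix.cons_val_zero, Matrix.cons_val_one, Matrix.head_cons, Matrix.head_fin_const,
      Matrix.empty_val', Matrix.cons_val_fin_one, smul_eq_mul, Matrix.of_apply, if_true,
      if_false, Fin.isValue, Fin.reduceEq, one_pow, mul_one, mul_zero]
    have hσ : σ ≠ 0 := left_ne_zero_of_mul h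
    have hlam : lam ≠ 0 := right_ne_zero_of_mul h
    field_simp
    ring
end

section
/- Let 0 < p < 1, φ ≥ 0, ψ > 0. Define K := [[p, 1−p],[0, 1]], e₁ := (1,0)ᵀ, e₂ := (0,1)ᵀ, and the matrices C₁ := K − (φ+ψ)I₂, C₂ := K − (φ+ψ)e₂e₂ᵀ, C₃ := K − (φ+ψ)e₁e₁ᵀ, C₄ := K. Then the four determinants det C₁, det C₂, det C₃, det C₄ are all nonzero with the same sign if and only if ψ + φ < p. -/
open Matrix

/-- Coherency and completeness condition for the Fisher-equation model with an
inertial Taylor rule, after quasi-differencing: the four regime-configuration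
determinants `det C₁, …, det C₄` are all nonzero with the same sign iff
`ψ + φ < p`. -/
theorem inertial_taylor_cc_iff (p phi ψ : ℝ)
    (hp0 : 0 < p) (hp1 : p < 1) (hphi : 0 ≤ phi) (hψ : 0 < ψ) :
    (let K : Matrix (Fin 2) (Fin 2) ℝ := !![p, 1 - p; 0, 1]
     let C₁ : Matrix (Fin 2) (Fin 2) ℝ := K - (phi + ψ) • (1 : Matrix (Fin 2) (Fin 2) ℝ)
     let C₂ : Matrix (Fin 2) (Fin 2) ℝ := K - (phi + ψ) • !![(0:ℝ), 0; 0, 1]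
     let C₃ : Matrix (Fin 2) (Fin 2) ℝ := K - (phi + ψ) • !![(1:ℝ), 0; 0, 0]
     let C₄ : Matrix (Fin 2) (Fin 2) ℝ := K
     (((0 < C₁.det ∧ 0 < C₂.det ∧ 0 < C₃.det ∧ 0 < C₄.det) ∨
       (C₁.det < 0 ∧ C₂.det < 0 ∧ C₃.det < 0 ∧ C₄.det < 0)) ↔ ψ + phi < p)) := by
  simp only [Matrix.det_fin_two, Matrix.sub_apply, Matrix.smul_apply,
    Matrix.one_apply, Matrix.cons_val', Matrix.cons_val_zero, Matrix.cons_val_one,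
    Matrix.head_cons, Matrix.head_fin_const, Matrix.empty_val', Matrix.cons_val_fin_one,
    smul_eq_mul]
  norm_num
  constructor
  · rintro (⟨h1, h2, h3, h4⟩ | ⟨h1, h2, h3, h4⟩) <;> nlinarith
  · intro h
    left
    refine ⟨?_, ?_, ?_, ?_⟩ <;> nlinarith
end

section
/- Let ψ > 1, φ ≥ 0, 0 < p < 1, μ > 0, and r^L < 0. Consider the system in (Ỹ₁, Ỹ₂) ∈ ℝ² given, for each state i ∈ {1,2}, by: −(ψ+φ)Ỹ_i + (KỸ)_i − (KM̂)_i = 0 if ψỸ_i > −μ, and (KỸ)_i − (KM̂)_i + μ(φ+ψ)/ψ = 0 if ψỸ_i ≤ −μ, where K := [[p, 1−p],[0, 1]] and M̂ := (−r^L, 0)ᵀ. Then: (i) the PIR–PIR solution Ỹ = (p r^L/(ψ+φ−p), 0) satisfies its regime inequalities if and only if −r^L < μ(ψ+φ−p)/(ψp); (ii) the ZIR–PIR solution Ỹ = (−r^L − μ(φ+ψ)/(ψp), 0) satisfies its regime inequalities if and only if −r^L ≤ μ(ψ+φ−p)/(ψp). Hence a minimum state variable solution with the zero lower bound slack in the absorbing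 state exists if and only if −r^L ≤ μ(ψ+φ−p)/(ψp). -/
open Matrix

/-- Support restrictions in the quasi-differenced Fisher-equation model with an
inertial Taylor rule: (i) the PIR–PIR candidate solution satisfies its regime
inequalities iff `−r^L < μ(ψ+φ−p)/(ψp)`; (ii) the ZIR–PIR candidate solution
satisfies its regime inequalities iff `−r^L ≤ μ(ψ+φ−p)/(ψp)`; hence an MSV
solution with the ZLB slack in the absorbing state exists iff
`−r^L ≤ μ(ψ+φ−p)/(ψp)`. -/
theorem inertial_taylor_support_restriction (ψ phi p μ rL : ℝ)
    (hψ : 1 < ψ) (hphi : 0 ≤ phi) (hp0 : 0 < p) (hp1 : p < 1)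
    (hμ : 0 < μ) (hrL : rL < 0) :
    (let K : Matrix (Fin 2) (Fin 2) ℝ := !![p, 1 - p; 0, 1]
     let Mhat : Fin 2 → ℝ := ![-rL, 0]
     let eqPIR : (Fin 2 → ℝ) → Fin 2 → Prop := fun Y i =>
       -(ψ + phi) * Y i + (K.mulVec Y) i - (K.mulVec Mhat) i = 0
     let eqZIR : (Fin 2 → ℝ) → Fin 2 → Prop := fun Y i =>
       (K.mulVec Y) i - (K.mulVec Mhat) i + μ * (phi + ψ) / ψ = 0
     let Ypp : Fin 2 → ℝ := ![p * rL / (ψ + phi - p), 0]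
     let Yzp : Fin 2 → ℝ := ![-rL - μ * (phi + ψ) / (ψ * p), 0]
     ((∀ i, eqPIR Ypp i) ∧
       ((∀ i, -μ < ψ * Ypp i) ↔ -rL < μ * (ψ + phi - p) / (ψ * p))) ∧
     ((eqZIR Yzp 0 ∧ eqPIR Yzp 1) ∧
       ((ψ * Yzp 0 ≤ -μ ∧ -μ < ψ * Yzp 1) ↔ -rL ≤ μ * (ψ + phi - p) / (ψ * p))) ∧
     ((∃ Y : Fin 2 → ℝ,
        (∀ i, (-μ < ψ * Y i ∧ eqPIR Y i) ∨ (ψ * Y i ≤ -μ ∧ eqZIR Y i)) ∧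
        -μ < ψ * Y 1) ↔
       -rL ≤ μ * (ψ + phi - p) / (ψ * p))) := by
  dsimp only
  simp only [Matrix.mulVec, dotProduct, Fin.sum_univ_two, Matrix.cons_val_zero,
    Matrix.cons_val_one, Matrix.head_cons, Matrix.cons_val', Matrix.head_fin_const,
    Matrix.empty_val', Matrix.of_apply]
  have hψ0 : (0:ℝ) < ψ := by linarith
  have hd : 0 < ψ + phi - p := by linarith
  have hψp : 0 < ψ * p := by positivity
  have hiff0 : (-μ < ψ * (p * rL / (ψ + phi - p))) ↔ -rL < μ * (ψ + phi - p) / (ψ * p) := by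
    rw [show ψ * (p * rL / (ψ + phi - p)) = ψ * p * rL / (ψ + phi - p) by ring,
      lt_div_iff₀ hd, lt_div_iff₀ hψp]
    constructor <;> intro h <;> nlinarith [h]
  have hiff1 : ψ * (-rL - μ * (phi + ψ) / (ψ * p)) ≤ -μ ↔
      -rL ≤ μ * (ψ + phi - p) / (ψ * p) := by
    rw [show ψ * (-rL - μ * (phi + ψ) / (ψ * p)) = (ψ * p * (-rL) - μ * (phi + ψ)) / p by
        field_simp,
      div_le_iff₀ hp0, le_div_iff₀ hψp]
    constructor <;> intro h <;> nlinarith [h]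
  refine ⟨⟨?_, ?_⟩, ⟨⟨?_, ?_⟩, ?_⟩, ?_⟩
  · intro i; fin_cases i <;> (dsimp; field_simp) <;> ring
  · constructor
    · intro h
      exact hiff0.mp (by simpa using h 0)
    · intro h i
      fin_cases i
      · simpa using hiff0.mpr h
      · dsimp; linarith
  · field_simp; ring
  · ring
  · constructor
    · rintro ⟨h0, _⟩
      exact hiff1.mp h0
    · intro h
      exact ⟨hiff1.mpr h, by linarith⟩
  · constructor
    · rintro ⟨Y, hY, h1⟩
      have e1 := hY 1
      have e0 := hY 0
      simp only [Matrix.cons_val_one, Matrix.head_cons, Matrix.cons_val_zero,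
        Matrix.cons_val_fin_one, Matrix.head_fin_const] at e0 e1
      have hY1 : Y 1 = 0 := by
        rcases e1 with ⟨hin, e⟩ | ⟨hin, e⟩
        · have h2 : (ψ + phi - 1) * Y 1 = 0 := by linarith [e]
          rcases mul_eq_zero.mp h2 with h3 | h3
          · linarith
          · exact h3
        · linarith
      rcases e0 with ⟨hin, e⟩ | ⟨hin, e⟩
      · rw [hY1] at e
        have hY0 : Y 0 = p * rL / (ψ + phi - p) := by
          field_simp
          nlinarith [e]
        rw [hY0] at hin
        exact le_of_lt (hiff0.mp hin)
      · rw [hY1] at e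
        have hY0 : Y 0 = -rL - μ * (phi + ψ) / (ψ * p) := by
          field_simp at e ⊢
          nlinarith [e]
        rw [hY0] at hin
        exact hiff1.mp hin
    · intro h
      refine ⟨![-rL - μ * (phi + ψ) / (ψ * p), 0], ?_, by dsimp; linarith⟩
      intro i
      fin_cases i
      · right
        refine ⟨by simpa using hiff1.mpr h, ?_⟩
        dsimp; field_simp; ring
      · left
        refine ⟨by dsimp; linarith, ?_⟩
        dsimp; ring
end

section
/- Let ψ > 1, 0 < p < 1, μ > 0, and r^L < 0. Consider the system in (π̂₁, π̂₂) ∈ ℝ²: p π̂₁ + (1−p)π̂₂ = max{−μ, ψπ̂₁} − p r^L and π̂₂ = max{−μ, ψπ̂₂}. Then π̂₂ ∈ {0, −μ} in any solution, and the solution set is exactly the set of the following pairs whose stated condition holds: (i) (p r^L/(ψ−p), 0), valid if and only if −r^L < μ(ψ−p)/(ψp); (ii) (−r^L − μ/p, 0), valid if and only if −r^L ≤ μ(ψ−p)/(ψp); (iii) ((p r^L − (1−p)μ)/(ψ−p), −μ), valid if and only if −r^L < μ(ψ−1)/ψ; (iv) (−r^L − μ, −μ), valid if and only if −r^L ≤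 μ(ψ−1)/ψ. In particular, the system has no solution if and only if −r^L > μ(ψ−p)/(ψp), and up to four distinct solutions otherwise. -/
/-- Multiplicity of MSV solutions in the Fisher-equation model with an active
Taylor rule and a transitory/absorbing two-state shock: in any solution
`π̂₂ ∈ {0, −μ}`; the solution set is exactly the set of the four listed pairs
under their respective conditions; there is no solution iff
`−r^L > μ(ψ−p)/(ψp)`; and there are at most four solutions. -/
theorem fisher_msv_solutions (ψ p μ rL : ℝ)
    (hψ : 1 < ψ) (hp0 : 0 < p) (hp1 : p < 1) (hμ : 0 < μ) (hrL : rL < 0) :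
    (let S : Set (ℝ × ℝ) := {π | p * π.1 + (1 - p) * π.2 = max (-μ) (ψ * π.1) - p * rL ∧
                                  π.2 = max (-μ) (ψ * π.2)}
     (∀ π ∈ S, π.2 = 0 ∨ π.2 = -μ) ∧
     (S = {π | (π = (p * rL / (ψ - p), 0) ∧ -rL < μ * (ψ - p) / (ψ * p)) ∨
               (π = (-rL - μ / p, 0) ∧ -rL ≤ μ * (ψ - p) / (ψ * p)) ∨
               (π = ((p * rL - (1 - p) * μ) / (ψ - p), -μ) ∧ -rL < μ * (ψ - 1) / ψ) ∨
               (π = (-rL - μ, -μ) ∧ -rL ≤ μ * (ψ - 1) / ψ)}) ∧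
     (S = ∅ ↔ μ * (ψ - p) / (ψ * p) < -rL) ∧
     S.Finite ∧ S.ncard ≤ 4) := by
  intro S
  have hψ0 : (0:ℝ) < ψ := by linarith
  have hψp : (0:ℝ) < ψ - p := by linarith
  have hp1' : (0:ℝ) < 1 - p := by linarith
  -- characterization of the second equation
  have hy : ∀ y : ℝ, y = max (-μ) (ψ * y) ↔ (y = 0 ∨ y = -μ) := by
    intro y
    constructor
    · intro h
      rcases le_or_gt (ψ * y) (-μ) with hc | hc
      · right; rwa [max_eq_left hc] at h
      · left
        rw [max_eq_right hc.le] at h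
        have h1 : (ψ - 1) * y = 0 := by linarith [h]
        rcases mul_eq_zero.mp h1 with h' | h'
        · linarith
        · exact h'
    · rintro (rfl | rfl)
      · rw [mul_zero, max_eq_right (by linarith : -μ ≤ (0:ℝ))]
      · rw [max_eq_left (by nlinarith : ψ * (-μ) ≤ -μ)]
  have hmem : ∀ π : ℝ × ℝ, π ∈ S ↔
      (p * π.1 + (1 - p) * π.2 = max (-μ) (ψ * π.1) - p * rL ∧
        π.2 = max (-μ) (ψ * π.2)) := fun _ => Iff.rfl
  -- the main set characterization
  have hSet : S = {π : ℝ × ℝ |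
      (π = (p * rL / (ψ - p), 0) ∧ -rL < μ * (ψ - p) / (ψ * p)) ∨
      (π = (-rL - μ / p, 0) ∧ -rL ≤ μ * (ψ - p) / (ψ * p)) ∨
      (π = ((p * rL - (1 - p) * μ) / (ψ - p), -μ) ∧ -rL < μ * (ψ - 1) / ψ) ∨
      (π = (-rL - μ, -μ) ∧ -rL ≤ μ * (ψ - 1) / ψ)} := by
    ext ⟨x, y⟩
    rw [hmem]
    simp only [Set.mem_setOf_eq, Prod.mk.injEq]
    constructor
    · rintro ⟨h1, h2⟩
      rcases (hy y).mp h2 with rfl | rfl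
      · rcases lt_or_ge (-μ) (ψ * x) with hc | hc
        · rw [max_eq_right hc.le] at h1
          left
          refine ⟨⟨?_, rfl⟩, ?_⟩
          · rw [eq_div_iff (ne_of_gt hψp)]; linarith
          · rw [lt_div_iff₀ (by positivity)]
            have h4 : (ψ - p) * (-μ) < (ψ - p) * (ψ * x) :=
              mul_lt_mul_of_pos_left hc hψp
            have h5 : (ψ - p) * (ψ * x) = ψ * ((ψ - p) * x) := by ring
            have h6 : (ψ - p) * x = p * rL := by linarith
            rw [h5, h6] at h4
            linarith [h4]
        · rw [max_eq_left hc] at h1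
          right; left
          refine ⟨⟨?_, rfl⟩, ?_⟩
          · field_simp
            linarith
          · rw [le_div_iff₀ (by positivity)]
            have h4 : p * (ψ * x) ≤ p * (-μ) := mul_le_mul_of_nonneg_left hc hp0.le
            have h5 : p * (ψ * x) = ψ * (p * x) := by ring
            have h6 : p * x = -μ - p * rL := by linarith
            rw [h5, h6] at h4
            linarith [h4]
      · rcases lt_or_ge (-μ) (ψ * x) with hc | hc
        · rw [max_eq_right hc.le] at h1
          right; right; left
          refine ⟨⟨?_, rfl⟩, ?_⟩
          · rw [eq_div_iff (ne_of_gt hψp)]; linarith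
          · rw [lt_div_iff₀ hψ0]
            have h4 : (ψ - p) * (-μ) < (ψ - p) * (ψ * x) :=
              mul_lt_mul_of_pos_left hc hψp
            have h5 : (ψ - p) * (ψ * x) = ψ * ((ψ - p) * x) := by ring
            have h6 : (ψ - p) * x = p * rL - (1 - p) * μ := by linarith
            rw [h5, h6] at h4
            -- h4 : (ψ - p) * (-μ) < ψ * (p * rL - (1 - p) * μ)
            have h7 : (-rL * ψ) * p < (μ * (ψ - 1)) * p := by nlinarith [h4]
            exact lt_of_mul_lt_mul_right h7 hp0.le
        · rw [max_eq_left hc] at h1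
          right; right; right
          have hx : x = -rL - μ := by
            have h6 : p * x = p * (-rL - μ) := by ring_nf; linarith
            exact mul_left_cancel₀ (ne_of_gt hp0) h6
          subst hx
          refine ⟨⟨rfl, rfl⟩, ?_⟩
          rw [le_div_iff₀ hψ0]
          nlinarith [hc]
    · rintro (⟨⟨rfl, rfl⟩, hcond⟩ | ⟨⟨rfl, rfl⟩, hcond⟩ |
              ⟨⟨rfl, rfl⟩, hcond⟩ | ⟨⟨rfl, rfl⟩, hcond⟩)
      · have hv : p * rL / (ψ - p) * (ψ - p) = p * rL :=
          div_mul_cancel₀ _ (ne_of_gt hψp)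
        have hcond' : -rL * (ψ * p) < μ * (ψ - p) :=
          (lt_div_iff₀ (by positivity)).mp hcond
        have hmax : -μ < ψ * (p * rL / (ψ - p)) := by
          have h8 : (ψ * (p * rL / (ψ - p))) * (ψ - p) = ψ * (p * rL) := by
            field_simp
          nlinarith [h8, hcond']
        constructor
        · rw [max_eq_right hmax.le]
          have h9 : p * (p * rL / (ψ - p)) - (ψ * (p * rL / (ψ - p))) =
              -(ψ - p) * (p * rL / (ψ - p)) := by ring
          nlinarith [hv, h9]
        · exact ((hy 0).mpr (Or.inl rfl))
      · have hv : p * (-rL - μ / p) = -(p * rL) - μ := by field_simp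
        have hcond' : -rL * (ψ * p) ≤ μ * (ψ - p) :=
          (le_div_iff₀ (by positivity)).mp hcond
        have hmax : ψ * (-rL - μ / p) ≤ -μ := by
          have h6 : p * (ψ * (-rL - μ / p)) = ψ * (p * (-rL - μ / p)) := by ring
          rw [hv] at h6
          have h7 : p * (ψ * (-rL - μ / p)) ≤ p * (-μ) := by
            rw [h6]; linarith [hcond']
          exact le_of_mul_le_mul_left h7 hp0
        constructor
        · rw [max_eq_left hmax]
          linarith [hv]
        · exact ((hy 0).mpr (Or.inl rfl))
      · have hv : (p * rL - (1 - p) * μ) / (ψ - p) * (ψ - p) =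
            p * rL - (1 - p) * μ := div_mul_cancel₀ _ (ne_of_gt hψp)
        have hcond' : -rL * ψ < μ * (ψ - 1) := (lt_div_iff₀ hψ0).mp hcond
        have hmax : -μ < ψ * ((p * rL - (1 - p) * μ) / (ψ - p)) := by
          have h8 : (ψ * ((p * rL - (1 - p) * μ) / (ψ - p))) * (ψ - p) =
              ψ * (p * rL - (1 - p) * μ) := by field_simp
          nlinarith [h8, mul_lt_mul_of_pos_left hcond' hp0]
        constructor
        · rw [max_eq_right hmax.le]
          have h9 : p * ((p * rL - (1 - p) * μ) / (ψ - p)) -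
              ψ * ((p * rL - (1 - p) * μ) / (ψ - p)) =
              -(ψ - p) * ((p * rL - (1 - p) * μ) / (ψ - p)) := by ring
          nlinarith [hv, h9]
        · exact ((hy (-μ)).mpr (Or.inr rfl))
      · have hcond' : -rL * ψ ≤ μ * (ψ - 1) := (le_div_iff₀ hψ0).mp hcond
        have hmax : ψ * (-rL - μ) ≤ -μ := by nlinarith [hcond']
        constructor
        · rw [max_eq_left hmax]
          ring
        · exact ((hy (-μ)).mpr (Or.inr rfl))
  have hBA : μ * (ψ - 1) / ψ ≤ μ * (ψ - p) / (ψ * p) := by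
    rw [div_le_div_iff₀ hψ0 (by positivity)]
    nlinarith [mul_pos (mul_pos hμ hψ0) (mul_pos hψ0 hp1')]
  refine ⟨?_, hSet, ?_, ?_, ?_⟩
  · intro π h
    exact (hy π.2).mp ((hmem π).mp h).2
  · constructor
    · intro hE
      by_contra hcon
      push_neg at hcon
      have hmemb : ((-rL - μ / p, 0) : ℝ × ℝ) ∈ S := by
        rw [hSet]
        exact Or.inr (Or.inl ⟨rfl, hcon⟩)
      rw [hE] at hmemb
      exact hmemb
    · intro hlt
      rw [hSet]
      ext π
      simp only [Set.mem_setOf_eq, Set.mem_empty_iff_false, iff_false]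
      rintro (⟨_, h⟩ | ⟨_, h⟩ | ⟨_, h⟩ | ⟨_, h⟩) <;> linarith [hBA]
  · refine Set.Finite.subset (Set.toFinite
      ({(p * rL / (ψ - p), 0), (-rL - μ / p, 0),
        ((p * rL - (1 - p) * μ) / (ψ - p), -μ), (-rL - μ, -μ)} : Set (ℝ × ℝ))) ?_
    rw [hSet]
    rintro π (⟨h, _⟩ | ⟨h, _⟩ | ⟨h, _⟩ | ⟨h, _⟩) <;> simp [h]
  · have hsub : S ⊆ ({(p * rL / (ψ - p), 0), (-rL - μ / p, 0),
        ((p * rL - (1 - p) * μ) / (ψ - p), -μ), (-rL - μ, -μ)} : Set (ℝ × ℝ)) := by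
      rw [hSet]
      rintro π (⟨h, _⟩ | ⟨h, _⟩ | ⟨h, _⟩ | ⟨h, _⟩) <;> simp [h]
    have h0 := Set.ncard_le_ncard hsub (Set.toFinite _)
    have hd : ({(-rL - μ, -μ)} : Set (ℝ × ℝ)).ncard = 1 := Set.ncard_singleton _
    have hc := Set.ncard_insert_le (((p * rL - (1 - p) * μ) / (ψ - p), -μ) : ℝ × ℝ)
      ({(-rL - μ, -μ)} : Set (ℝ × ℝ))
    have hb := Set.ncard_insert_le ((-rL - μ / p, 0) : ℝ × ℝ)
      (insert (((p * rL - (1 - p) * μ) / (ψ - p), -μ) : ℝ × ℝ)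
        ({(-rL - μ, -μ)} : Set (ℝ × ℝ)))
    have ha := Set.ncard_insert_le ((p * rL / (ψ - p), 0) : ℝ × ℝ)
      (insert ((-rL - μ / p, 0) : ℝ × ℝ)
        (insert (((p * rL - (1 - p) * μ) / (ψ - p), -μ) : ℝ × ℝ)
          ({(-rL - μ, -μ)} : Set (ℝ × ℝ))))
    omega
end
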